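/- arXiv:2210.14735 — 5 statements merged into one kernel-verified Lean document; each statement's English description precedes it below -/
import Mathlib

section
/- Let X_1,…,X_{n+1} be iid real-valued random variables (ties allowed) and let X_{(j)} denote the j-th order statistic of X_1,…,X_n. Then for any 1 ≤ j ≤ n, P[X_{n+1} ≤ X_{(j)}] ≥ j/(n+1). -/
open MeasureTheory ProbabilityTheory
open scoped ENNReal

noncomputable def binCDF (m k : ℕ) (p : ℝ) : ℝ :=
  ∑ i ∈ Finset.range (k + 1), (m.choose i : ℝ) * p ^ i * (1 - p) ^ (m - i)

noncomputable def betaCDF (a b : ℕ) (x : ℝ) : ℝ :=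
  (∫ t in (0:ℝ)..x, t ^ (a - 1) * (1 - t) ^ (b - 1)) /
    (∫ t in (0:ℝ)..1, t ^ (a - 1) * (1 - t) ^ (b - 1))

noncomputable def orderStat {n : ℕ} (x : Fin n → ℝ) (j : Fin n) : ℝ :=
  x (Tuple.sort x j)


section AuxLemmas
open Finset

lemma card_filter_comp_equiv {m : ℕ} (e : Equiv.Perm (Fin m)) (p : Fin m → Prop)
    [DecidablePred p] :
    (univ.filter fun i => p (e i)).card = (univ.filter p).card := by
  rw [← Finset.card_image_of_injective (univ.filter fun i => p (e i)) e.injective]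
  congr 1
  ext x
  simp only [Finset.mem_image, Finset.mem_filter, Finset.mem_univ, true_and]
  constructor
  · rintro ⟨q, hq, rfl⟩; exact hq
  · intro hx; exact ⟨e.symm x, by simpa using hx, by simp⟩

lemma card_lt_sort_le {m : ℕ} (v : Fin m → ℝ) (p : Fin m) :
    (univ.filter fun i => v i < v (Tuple.sort v p)).card ≤ p.val := by
  rw [← card_filter_comp_equiv (Tuple.sort v) (fun i => v i < v (Tuple.sort v p))]
  refine le_trans (Finset.card_le_card ?_) (le_of_eq (Fin.card_Iio (b := p)))
  intro q hq
  simp only [Finset.mem_filter, Finset.mem_univ, true_and] at hq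
  simp only [Finset.mem_Iio]
  by_contra hpq
  exact absurd (Tuple.monotone_sort v (not_lt.mp hpq)) (not_le.mpr hq)

lemma le_sort_iff {m : ℕ} (v : Fin m → ℝ) (t : ℝ) (k : Fin m) :
    t ≤ v (Tuple.sort v k) ↔ (univ.filter fun i => v i < t).card ≤ k.val := by
  constructor
  · intro h
    refine le_trans (Finset.card_le_card ?_) (card_lt_sort_le v k)
    intro i hi
    simp only [Finset.mem_filter, Finset.mem_univ, true_and] at hi ⊢
    exact lt_of_lt_of_le hi h
  · intro h
    by_contra hlt
    push_neg at hlt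
    have hsub : (Finset.Iic k).image (Tuple.sort v) ⊆ univ.filter fun i => v i < t := by
      intro i hi
      simp only [Finset.mem_image, Finset.mem_Iic] at hi
      obtain ⟨q, hq, rfl⟩ := hi
      simp only [Finset.mem_filter, Finset.mem_univ, true_and]
      exact lt_of_le_of_lt (Tuple.monotone_sort v hq) hlt
    have hc := Finset.card_le_card hsub
    rw [Finset.card_image_of_injective _ (Tuple.sort v).injective, Fin.card_Iic] at hc
    omega

lemma le_card_small_rank {m : ℕ} (v : Fin m → ℝ) {j : ℕ} (hj : j < m) :
    j ≤ (univ.filter fun k => (univ.filter fun i => v i < v k).card < j).card := by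
  have hsub : (Finset.Iio (⟨j, hj⟩ : Fin m)).image (Tuple.sort v) ⊆
      univ.filter fun k => (univ.filter fun i => v i < v k).card < j := by
    intro k hk
    simp only [Finset.mem_image, Finset.mem_Iio] at hk
    obtain ⟨p, hp, rfl⟩ := hk
    simp only [Finset.mem_filter, Finset.mem_univ, true_and]
    exact lt_of_le_of_lt (card_lt_sort_le v p) (Fin.lt_def.mp hp)
  have hc := Finset.card_le_card hsub
  rwa [Finset.card_image_of_injective _ (Tuple.sort v).injective, Fin.card_Iio] at hc

lemma joint_law_perm {Ω : Type*} [MeasurableSpace Ω] (P : Measure Ω) [IsProbabilityMeasure P]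
    {m : ℕ} (X : Fin m → Ω → ℝ) (hX : ∀ i, Measurable (X i)) (μ : Measure ℝ)
    [IsProbabilityMeasure μ]
    (hindep : iIndepFun X P)
    (hid : ∀ i, Measure.map (X i) P = μ) (e : Equiv.Perm (Fin m)) :
    Measure.map (fun ω i => X (e i) ω) P = Measure.pi (fun _ => μ) := by
  refine (Measure.pi_eq (μ := fun _ : Fin m => μ) fun s hs => ?_).symm
  rw [Measure.map_apply (measurable_pi_lambda _ fun i => hX (e i)) (MeasurableSet.univ_pi hs)]
  have hpre : (fun ω i => X (e i) ω) ⁻¹' Set.pi Set.univ s = ⋂ i, X i ⁻¹' s (e.symm i) := by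
    ext ω
    simp only [Set.mem_preimage, Set.mem_pi, Set.mem_univ, true_implies, Set.mem_iInter]
    constructor
    · intro h i
      have := h (e.symm i); simpa using this
    · intro h i
      have := h (e i); simpa using this
  rw [hpre]
  have hmi : P (⋂ i, X i ⁻¹' s (e.symm i)) = ∏ i, P (X i ⁻¹' s (e.symm i)) :=
    hindep.meas_iInter (fun i => ⟨s (e.symm i), hs _, rfl⟩)
  rw [hmi]
  have hP : ∀ i, P (X i ⁻¹' s (e.symm i)) = μ (s (e.symm i)) := fun i => by
    rw [← hid i, Measure.map_apply (hX i) (hs _)]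
  simp_rw [hP]
  exact Equiv.prod_comp e.symm (fun i => μ (s i))

lemma measurable_countLT {m : ℕ} (k : Fin m) (j : ℕ) :
    MeasurableSet {v : Fin m → ℝ | (univ.filter fun i => v i < v k).card < j} := by
  have hm : Measurable (fun v : Fin m → ℝ => (univ.filter fun i => v i < v k).card) := by
    simp_rw [Finset.card_filter]
    refine Finset.measurable_sum _ fun i _ => ?_
    exact Measurable.ite (measurableSet_lt (measurable_pi_apply i) (measurable_pi_apply k))
      measurable_const measurable_const
  exact hm (by trivial : MeasurableSet (Set.Iio j))

lemma card_filter_castSucc {n : ℕ} (w : Fin (n+1) → ℝ) :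
    (univ.filter fun i : Fin (n+1) => w i < w (Fin.last n)).card
      = (univ.filter fun i : Fin n => w i.castSucc < w (Fin.last n)).card := by
  simp_rw [Finset.card_filter]
  rw [Fin.sum_univ_castSucc]
  simp
end AuxLemmas

/-- For iid `X_1,…,X_{n+1}` (ties allowed), `P[X_{n+1} ≤ X_{(j)}] ≥ j/(n+1)`, where
`X_{(j)}` is the `j`-th order statistic of `X_1,…,X_n`. -/
theorem prob_le_orderStat_ge
    {Ω : Type*} [MeasurableSpace Ω] (P : Measure Ω) [IsProbabilityMeasure P]
    (n : ℕ) (X : Fin (n + 1) → Ω → ℝ) (hX : ∀ i, Measurable (X i))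
    (μ : Measure ℝ)
    (hindep : iIndepFun X P)
    (hid : ∀ i, Measure.map (X i) P = μ)
    (j : ℕ) (hj1 : 1 ≤ j) (hjn : j ≤ n) :
    (j : ℝ≥0∞) / (n + 1)
      ≤ P {ω | X (Fin.last n) ω ≤
          orderStat (fun i : Fin n => X i.castSucc ω) ⟨j - 1, by omega⟩} := by
  haveI hμ : IsProbabilityMeasure μ := by
    rw [← hid 0]; exact Measure.isProbabilityMeasure_map (hX 0).aemeasurable
  set Y : Ω → (Fin (n+1) → ℝ) := fun ω i => X i ω with hY
  have hYm : Measurable Y := measurable_pi_lambda _ hX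
  set S : Fin (n+1) → Set (Fin (n+1) → ℝ) :=
    fun k => {v | (Finset.univ.filter fun i => v i < v k).card < j} with hS
  have hSmeas : ∀ k, MeasurableSet (S k) := fun k => measurable_countLT k j
  set E : Fin (n+1) → Set Ω := fun k => Y ⁻¹' S k with hE
  have hEmeas : ∀ k, MeasurableSet (E k) := fun k => hYm (hSmeas k)
  have hgoal : {ω | X (Fin.last n) ω ≤
      orderStat (fun i : Fin n => X i.castSucc ω) ⟨j - 1, by omega⟩} = E (Fin.last n) := by
    ext ω
    simp only [Set.mem_setOf_eq, hE, hS, Set.mem_preimage, hY, orderStat]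
    have hcc := card_filter_castSucc (fun i => X i ω)
    beta_reduce at hcc
    constructor
    · intro h
      have h' := (le_sort_iff (fun i : Fin n => X i.castSucc ω)
        (X (Fin.last n) ω) ⟨j-1, by omega⟩).mp h
      simp only at h'
      omega
    · intro h
      exact (le_sort_iff (fun i : Fin n => X i.castSucc ω)
        (X (Fin.last n) ω) ⟨j-1, by omega⟩).mpr (by simp only; omega)
  have hlaw : ∀ e : Equiv.Perm (Fin (n+1)),
      Measure.map (fun ω i => X (e i) ω) P = Measure.pi (fun _ => μ) :=
    joint_law_perm P X hX μ hindep hid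
  have hPk : ∀ k, P (E k) = Measure.pi (fun _ : Fin (n+1) => μ) (S (Fin.last n)) := by
    intro k
    set e := Equiv.swap k (Fin.last n) with he
    have hEk : E k = (fun ω i => X (e i) ω) ⁻¹' S (Fin.last n) := by
      ext ω
      simp only [hE, hS, Set.mem_preimage, Set.mem_setOf_eq, hY]
      simp only [show e (Fin.last n) = k from Equiv.swap_apply_right _ _]
      rw [card_filter_comp_equiv e (fun i => X i ω < X k ω)]
    rw [hEk, ← hlaw e]
    exact (Measure.map_apply (measurable_pi_lambda _ fun i => hX (e i)) (hSmeas _)).symm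
  have hsum : ∑ k : Fin (n+1), P (E k) = ((n:ℝ≥0∞)+1) * P (E (Fin.last n)) := by
    rw [Finset.sum_congr rfl (fun k _ => (hPk k).trans (hPk (Fin.last n)).symm)]
    rw [Finset.sum_const, Finset.card_univ, Fintype.card_fin, nsmul_eq_mul]
    push_cast
    ring
  have hjle : (j : ℝ≥0∞) ≤ ∑ k : Fin (n+1), P (E k) := by
    have h1 : ∀ k, P (E k) = ∫⁻ ω, (E k).indicator 1 ω ∂P :=
      fun k => (lintegral_indicator_one (hEmeas k)).symm
    simp_rw [h1]
    rw [← lintegral_finset_sum _ (fun k _ => (measurable_one.indicator (hEmeas k)))]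
    have h2 : ∀ ω, (j : ℝ≥0∞) ≤ ∑ k : Fin (n+1), (E k).indicator 1 ω := by
      intro ω
      have h3 : ∑ k : Fin (n+1), (E k).indicator 1 ω
          = ((Finset.univ.filter fun k : Fin (n+1) =>
              (Finset.univ.filter fun i => X i ω < X k ω).card < j).card : ℝ≥0∞) := by
        rw [Finset.card_filter]
        push_cast
        refine Finset.sum_congr rfl fun k _ => ?_
        by_cases hk : (Finset.univ.filter fun i => X i ω < X k ω).card < j
        · simp [Set.indicator_apply, hE, hS, hY, hk]
        · simp [Set.indicator_apply, hE, hS, hY, hk]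
      rw [h3]
      exact_mod_cast le_card_small_rank (fun i => X i ω) (j := j) (by omega)
    calc (j:ℝ≥0∞) = ∫⁻ _, (j:ℝ≥0∞) ∂P := by simp
      _ ≤ ∫⁻ ω, ∑ k : Fin (n+1), (E k).indicator 1 ω ∂P := lintegral_mono h2
  rw [hgoal]
  rw [ENNReal.div_le_iff (by simp) (by
    exact ENNReal.add_ne_top.mpr ⟨ENNReal.natCast_ne_top n, ENNReal.one_ne_top⟩)]
  rw [mul_comm]
  calc (j:ℝ≥0∞) ≤ ∑ k : Fin (n+1), P (E k) := hjle
    _ = ((n:ℝ≥0∞)+1) * P (E (Fin.last n)) := hsum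
end

section
/- Let r_1,…,r_{n+1} be iid real-valued random variables, and for α ∈ (0,1) let Q̂ = r_{(⌈(1−α)(n+1)⌉)}, the ⌈(1−α)(n+1)⌉-th order statistic of r_1,…,r_n (interpreted as +∞ if ⌈(1−α)(n+1)⌉ > n). Then P[r_{n+1} ≤ Q̂] ≥ 1−α. Moreover, if the r_i are almost surely distinct, then P[r_{n+1} ≤ Q̂] ≤ 1−α+1/(n+1). -/
open MeasureTheory ProbabilityTheory
open scoped ENNReal

/-- `Q̂ = r_{(⌈(1-α)(n+1)⌉)}`, the `⌈(1-α)(n+1)⌉`-th order statistic of `r_1,…,r_n`,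
interpreted as `+∞` if `⌈(1-α)(n+1)⌉ > n`. -/
noncomputable def Qhat (n : ℕ) (α : ℝ) (r : Fin n → ℝ) : EReal :=
  if h : (⌈(1 - α) * (n + 1 : ℝ)⌉).toNat - 1 < n then
    ((orderStat r ⟨(⌈(1 - α) * (n + 1 : ℝ)⌉).toNat - 1, h⟩ : ℝ) : EReal)
  else ⊤

/-! ### Auxiliary deterministic lemmas -/

/-- number of entries strictly below `t` -/
noncomputable def cntLT {m : ℕ} (x : Fin m → ℝ) (t : ℝ) : ℕ :=
  (Finset.univ.filter (fun i => x i < t)).card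

lemma cntLT_le_of_le_sort {m : ℕ} (x : Fin m → ℝ) (t : ℝ) (p : Fin m)
    (ht : t ≤ x (Tuple.sort x p)) : cntLT x t ≤ p := by
  classical
  set σ := Tuple.sort x
  have hmono : Monotone (x ∘ σ) := Tuple.monotone_sort x
  have : (Finset.univ.filter (fun i => x i < t)) ⊆ (Finset.Iio p).image σ := by
    intro i hi
    simp only [Finset.mem_filter, Finset.mem_univ, true_and] at hi
    have hlt : σ.symm i < p := by
      by_contra hge
      push_neg at hge
      have := hmono hge
      simp only [Function.comp_apply, Equiv.apply_symm_apply] at this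
      exact absurd (lt_of_lt_of_le hi ht) (not_lt.2 this)
    refine Finset.mem_image.2 ⟨σ.symm i, Finset.mem_Iio.2 hlt, by simp⟩
  calc cntLT x t ≤ ((Finset.Iio p).image σ).card := Finset.card_le_card this
    _ ≤ (Finset.Iio p).card := Finset.card_image_le
    _ = p := Fin.card_Iio p

lemma lt_cntLT_of_sort_lt {m : ℕ} (x : Fin m → ℝ) (t : ℝ) (p : Fin m)
    (ht : x (Tuple.sort x p) < t) : (p : ℕ) < cntLT x t := by
  classical
  set σ := Tuple.sort x
  have hmono : Monotone (x ∘ σ) := Tuple.monotone_sort x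
  have hsub : (Finset.Iic p).image σ ⊆ Finset.univ.filter (fun i => x i < t) := by
    intro i hi
    rcases Finset.mem_image.1 hi with ⟨q, hq, rfl⟩
    have hq' : q ≤ p := Finset.mem_Iic.1 hq
    have := hmono hq'
    simp only [Function.comp_apply] at this
    exact Finset.mem_filter.2 ⟨Finset.mem_univ _, lt_of_le_of_lt this ht⟩
  have hcard : ((Finset.Iic p).image σ).card = (p : ℕ) + 1 := by
    rw [Finset.card_image_of_injective _ σ.injective, Fin.card_Iic p]
  have := Finset.card_le_card hsub
  rw [hcard] at this
  exact lt_of_lt_of_le (Nat.lt_succ_self _) this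

lemma le_orderStat_iff {m : ℕ} (x : Fin m → ℝ) (t : ℝ) (p : Fin m) :
    t ≤ orderStat x p ↔ cntLT x t ≤ p := by
  constructor
  · exact cntLT_le_of_le_sort x t p
  · intro h
    by_contra hlt
    push_neg at hlt
    exact absurd h (not_le.2 (lt_cntLT_of_sort_lt x t p hlt))

lemma card_filter_val_lt {m k : ℕ} (hk : k ≤ m) :
    (Finset.univ.filter (fun p : Fin m => (p : ℕ) < k)).card = k := by
  classical
  have himg : (Finset.univ.filter (fun p : Fin m => (p : ℕ) < k)).image Fin.val = Finset.range k := by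
    ext i
    simp only [Finset.mem_image, Finset.mem_filter, Finset.mem_univ, true_and, Finset.mem_range]
    constructor
    · rintro ⟨p, hp, rfl⟩; exact hp
    · intro hi; exact ⟨⟨i, lt_of_lt_of_le hi hk⟩, hi, rfl⟩
  calc (Finset.univ.filter (fun p : Fin m => (p : ℕ) < k)).card
      = ((Finset.univ.filter (fun p : Fin m => (p : ℕ) < k)).image Fin.val).card :=
        (Finset.card_image_of_injective _ Fin.val_injective).symm
    _ = (Finset.range k).card := by rw [himg]
    _ = k := Finset.card_range k

lemma sort_image_subset {m k : ℕ} (y : Fin m → ℝ) :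
    (Finset.univ.filter (fun p : Fin m => (p : ℕ) < k)).image (Tuple.sort y) ⊆
      Finset.univ.filter (fun j => cntLT y (y j) < k) := by
  classical
  intro j hj
  rcases Finset.mem_image.1 hj with ⟨p, hp, rfl⟩
  have hp' := (Finset.mem_filter.1 hp).2
  have h1 : cntLT y (y (Tuple.sort y p)) ≤ (p : ℕ) :=
    cntLT_le_of_le_sort y _ p le_rfl
  exact Finset.mem_filter.2 ⟨Finset.mem_univ _, lt_of_le_of_lt h1 hp'⟩

lemma count_lemma_ge {m k : ℕ} (y : Fin m → ℝ) (hk : k ≤ m) :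
    k ≤ (Finset.univ.filter fun j => cntLT y (y j) < k).card := by
  classical
  calc k = (Finset.univ.filter (fun p : Fin m => (p : ℕ) < k)).card := (card_filter_val_lt hk).symm
    _ = ((Finset.univ.filter (fun p : Fin m => (p : ℕ) < k)).image (Tuple.sort y)).card :=
        (Finset.card_image_of_injective _ (Tuple.sort y).injective).symm
    _ ≤ _ := Finset.card_le_card (sort_image_subset y)

lemma count_lemma_eq {m k : ℕ} (y : Fin m → ℝ) (hk : k ≤ m) (hy : Function.Injective y) :
    (Finset.univ.filter fun j => cntLT y (y j) < k).card = k := by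
  classical
  set τ := Tuple.sort y
  have hmono : Monotone (y ∘ τ) := Tuple.monotone_sort y
  have hsub2 : Finset.univ.filter (fun j => cntLT y (y j) < k) ⊆
      (Finset.univ.filter (fun p : Fin m => (p : ℕ) < k)).image τ := by
    intro j hj
    have hj' := (Finset.mem_filter.1 hj).2
    set p := τ.symm j with hp
    have hjp : j = τ p := by simp [hp]
    have hple : ((p : ℕ)) ≤ cntLT y (y j) := by
      have hsub : (Finset.Iio p).image τ ⊆ Finset.univ.filter (fun i => y i < y j) := by
        intro i hi
        rcases Finset.mem_image.1 hi with ⟨q, hq, rfl⟩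
        have hq' : q < p := Finset.mem_Iio.1 hq
        have hle : y (τ q) ≤ y (τ p) := hmono hq'.le
        have hne : y (τ q) ≠ y (τ p) := fun h => absurd (τ.injective (hy h)) hq'.ne
        rw [← hjp] at hle hne
        exact Finset.mem_filter.2 ⟨Finset.mem_univ _, lt_of_le_of_ne hle hne⟩
      calc (p : ℕ) = ((Finset.Iio p).image τ).card := by
            rw [Finset.card_image_of_injective _ τ.injective, Fin.card_Iio p]
        _ ≤ _ := Finset.card_le_card hsub
    refine Finset.mem_image.2 ⟨p, Finset.mem_filter.2 ⟨Finset.mem_univ _, lt_of_le_of_lt hple hj'⟩, hjp.symm⟩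
  have heq : Finset.univ.filter (fun j => cntLT y (y j) < k) =
      (Finset.univ.filter (fun p : Fin m => (p : ℕ) < k)).image τ :=
    Finset.Subset.antisymm hsub2 (sort_image_subset y)
  rw [heq, Finset.card_image_of_injective _ τ.injective, card_filter_val_lt hk]

lemma cntLT_castSucc {n : ℕ} (x : Fin (n+1) → ℝ) :
    cntLT (fun i : Fin n => x i.castSucc) (x (Fin.last n)) = cntLT x (x (Fin.last n)) := by
  classical
  unfold cntLT
  simp_rw [Finset.card_filter]
  rw [Fin.sum_univ_castSucc]
  simp

/-! ### Measurability and product-measure lemmas -/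

lemma measurable_cntLT {m : ℕ} (j : Fin m) :
    Measurable (fun x : Fin m → ℝ => cntLT x (x j)) := by
  classical
  have h : ∀ i : Fin m, MeasurableSet {x : Fin m → ℝ | x i < x j} :=
    fun i => measurableSet_lt (measurable_pi_apply i) (measurable_pi_apply j)
  unfold cntLT
  simp_rw [Finset.card_filter]
  exact Finset.measurable_sum _ (fun i _ =>
    Measurable.ite (h i) measurable_const measurable_const)

lemma measurableSet_S {m : ℕ} (j : Fin m) (k : ℕ) :
    MeasurableSet {x : Fin m → ℝ | cntLT x (x j) < k} :=
  measurable_cntLT j (Set.finite_Iio k).measurableSet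

lemma cntLT_comp_perm {m : ℕ} (x : Fin m → ℝ) (g : Equiv.Perm (Fin m)) (t : ℝ) :
    cntLT (x ∘ g) t = cntLT x t := by
  classical
  unfold cntLT
  simp only [Function.comp_apply]
  have : Finset.univ.filter (fun i => x (g i) < t)
      = (Finset.univ.filter (fun i => x i < t)).image g.symm := by
    ext i
    simp [Finset.mem_image, Equiv.eq_symm_apply]
    constructor
    · intro h; exact ⟨g i, h, by simp⟩
    · rintro ⟨a, ha, rfl⟩; simpa using ha
  rw [this, Finset.card_image_of_injective _ g.symm.injective]

lemma map_eq_pi {Ω : Type*} [MeasurableSpace Ω] (P : Measure Ω) [IsProbabilityMeasure P]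
    (m : ℕ) (r : Fin m → Ω → ℝ) (hr : ∀ i, Measurable (r i)) (μ : Measure ℝ)
    [IsProbabilityMeasure μ]
    (hindep : iIndepFun r P)
    (hid : ∀ i, Measure.map (r i) P = μ) :
    Measure.map (fun ω i => r i ω) P = Measure.pi (fun _ => μ) := by
  have hR : Measurable (fun ω i => r i ω) := measurable_pi_lambda _ hr
  refine (Measure.pi_eq fun s hs => ?_).symm
  rw [Measure.map_apply hR (MeasurableSet.univ_pi hs)]
  have hpre : (fun ω i => r i ω) ⁻¹' Set.pi Set.univ s = ⋂ i ∈ Finset.univ, r i ⁻¹' s i := by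
    ext ω; simp [Set.mem_pi]
  rw [hpre, hindep.measure_inter_preimage_eq_mul Finset.univ (fun i _ => hs i)]
  refine Finset.prod_congr rfl fun i _ => ?_
  rw [← hid i, Measure.map_apply (hr i) (hs i)]

lemma pi_S_swap {m : ℕ} (μ : Measure ℝ) [IsProbabilityMeasure μ] (j j' : Fin m) (k : ℕ) :
    Measure.pi (fun _ : Fin m => μ) {x | cntLT x (x j) < k}
      = Measure.pi (fun _ : Fin m => μ) {x | cntLT x (x j') < k} := by
  classical
  set e := Equiv.swap j j'
  set T := MeasurableEquiv.piCongrLeft (fun _ : Fin m => ℝ) e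
  have hT : MeasurePreserving T (Measure.pi (fun _ : Fin m => μ)) (Measure.pi (fun _ => μ)) :=
    measurePreserving_piCongrLeft (fun _ => μ) e
  have hTx : ∀ (x : Fin m → ℝ), T x = x ∘ e.symm := by
    intro x
    funext i
    have := MeasurableEquiv.piCongrLeft_apply_apply (β := fun _ : Fin m => ℝ) e x (e.symm i)
    simpa using this
  have hpre : T ⁻¹' {x | cntLT x (x j) < k} = {x | cntLT x (x j') < k} := by
    ext x
    simp only [Set.mem_preimage, Set.mem_setOf_eq, hTx]
    have h1 : (x ∘ e.symm) j = x j' := by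
      simp only [Function.comp_apply]
      have : e.symm j = j' := by simp [e, Equiv.symm_swap, Equiv.swap_apply_left]
      rw [this]
    rw [h1, cntLT_comp_perm x e.symm]
  rw [← hpre, hT.measure_preimage (measurableSet_S j k).nullMeasurableSet]

lemma sum_S_eq_lintegral {m k : ℕ} (μ : Measure ℝ) [IsProbabilityMeasure μ] :
    ∑ j : Fin m, Measure.pi (fun _ : Fin m => μ) {x | cntLT x (x j) < k}
      = ∫⁻ x, ((Finset.univ.filter fun j => cntLT x (x j) < k).card : ℝ≥0∞)
          ∂(Measure.pi (fun _ : Fin m => μ)) := by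
  classical
  have h1 : ∀ j : Fin m, Measure.pi (fun _ : Fin m => μ) {x | cntLT x (x j) < k}
      = ∫⁻ x, ({x : Fin m → ℝ | cntLT x (x j) < k}).indicator 1 x
          ∂(Measure.pi (fun _ : Fin m => μ)) := by
    intro j
    rw [lintegral_indicator_one (measurableSet_S j k)]
  simp_rw [h1]
  rw [← lintegral_finset_sum _ (fun j _ => measurable_one.indicator (measurableSet_S j k))]
  refine lintegral_congr fun x => ?_
  rw [Finset.card_filter, Nat.cast_sum]
  refine Finset.sum_congr rfl fun j _ => ?_
  by_cases h : cntLT x (x j) < k <;> simp [Set.indicator_apply, h]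

/-- Split conformal marginal coverage: `P[r_{n+1} ≤ Q̂] ≥ 1-α`, and if the scores are
almost surely distinct, also `P[r_{n+1} ≤ Q̂] ≤ 1-α+1/(n+1)`. -/
theorem split_conformal_marginal_coverage
    {Ω : Type*} [MeasurableSpace Ω] (P : Measure Ω) [IsProbabilityMeasure P]
    (n : ℕ) (r : Fin (n + 1) → Ω → ℝ) (hr : ∀ i, Measurable (r i))
    (μ : Measure ℝ)
    (hindep : iIndepFun r P)
    (hid : ∀ i, Measure.map (r i) P = μ)
    (α : ℝ) (hα : α ∈ Set.Ioo (0:ℝ) 1) :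
    1 - α ≤ (P {ω | (r (Fin.last n) ω : EReal)
        ≤ Qhat n α (fun i => r i.castSucc ω)}).toReal ∧
      ((∀ i j : Fin (n + 1), i ≠ j → P {ω | r i ω = r j ω} = 0) →
        (P {ω | (r (Fin.last n) ω : EReal)
            ≤ Qhat n α (fun i => r i.castSucc ω)}).toReal ≤ 1 - α + 1 / (n + 1)) := by
  classical
  obtain ⟨hα0, hα1⟩ := hα
  have hμ : IsProbabilityMeasure μ := by
    rw [← hid 0]; exact Measure.isProbabilityMeasure_map (hr 0).aemeasurable
  have hnpos : (0:ℝ) < (n:ℝ) + 1 := by positivity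
  set c : ℤ := ⌈(1 - α) * ((n:ℝ) + 1)⌉ with hc
  set k : ℕ := c.toNat with hkdef
  have hcpos : 0 < c := Int.ceil_pos.2 (by nlinarith)
  have hkc : (k : ℤ) = c := Int.toNat_of_nonneg hcpos.le
  have hk1 : 1 ≤ k := by omega
  have hkR : ((k : ℝ)) = (c : ℝ) := by exact_mod_cast congrArg Int.cast hkc
  have hk_ge : (1 - α) * ((n:ℝ) + 1) ≤ (k:ℝ) := by rw [hkR, hc]; exact Int.le_ceil _
  have hk_lt : (k:ℝ) < (1 - α) * ((n:ℝ) + 1) + 1 := by rw [hkR, hc]; exact Int.ceil_lt_add_one _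
  have hk2 : k ≤ n + 1 := by
    have hcn : c ≤ (n:ℤ) + 1 := by
      rw [hc]; exact Int.ceil_le.2 (by push_cast; nlinarith)
    omega
  -- the ceiling expression in `Qhat`
  have hQidx : (⌈(1 - α) * ((n:ℕ) + 1 : ℝ)⌉).toNat = k := by rw [hkdef, hc]
  by_cases hcase : k - 1 < n
  · -- main case : k ≤ n
    set π : Measure (Fin (n+1) → ℝ) := Measure.pi (fun _ => μ) with hπ
    set R : Ω → Fin (n+1) → ℝ := fun ω i => r i ω with hRdef
    have hR : Measurable R := measurable_pi_lambda _ hr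
    have hmap : Measure.map R P = π := map_eq_pi P (n+1) r hr μ hindep hid
    -- identify the event
    have hEvent : {ω | (r (Fin.last n) ω : EReal) ≤ Qhat n α (fun i => r i.castSucc ω)}
        = R ⁻¹' {x | cntLT x (x (Fin.last n)) < k} := by
      ext ω
      simp only [Set.mem_setOf_eq, Set.mem_preimage, Qhat, hQidx, dif_pos hcase]
      rw [EReal.coe_le_coe_iff, le_orderStat_iff]
      have hxx : (fun i : Fin n => (R ω) i.castSucc) = fun i => r i.castSucc ω := rfl
      have hlast : R ω (Fin.last n) = r (Fin.last n) ω := rfl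
      rw [show (fun i : Fin n => r i.castSucc ω) = fun i : Fin n => (R ω) i.castSucc from rfl]
      rw [show r (Fin.last n) ω = R ω (Fin.last n) from rfl]
      rw [cntLT_castSucc (R ω)]
      simp only [Set.mem_setOf_eq]
      omega
    have hPE : P {ω | (r (Fin.last n) ω : EReal) ≤ Qhat n α (fun i => r i.castSucc ω)}
        = π {x | cntLT x (x (Fin.last n)) < k} := by
      rw [hEvent, ← hmap, Measure.map_apply hR (measurableSet_S _ k)]
    have hsum_swap : ∑ j : Fin (n+1), π {x | cntLT x (x j) < k}
        = ((n:ℝ≥0∞) + 1) * π {x | cntLT x (x (Fin.last n)) < k} := by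
      rw [Finset.sum_congr rfl (fun j _ => pi_S_swap μ j (Fin.last n) k)]
      rw [Finset.sum_const, Finset.card_univ, Fintype.card_fin, nsmul_eq_mul]
      push_cast
      ring
    have hlin := sum_S_eq_lintegral (m := n+1) (k := k) μ
    set q : ℝ := (π {x | cntLT x (x (Fin.last n)) < k}).toReal with hq
    have hfin : π {x | cntLT x (x (Fin.last n)) < k} ≤ 1 := prob_le_one
    -- lower bound on the sum
    have hsum_ge : (k : ℝ≥0∞) ≤ ∑ j : Fin (n+1), π {x | cntLT x (x j) < k} := by
      rw [hlin]
      calc (k : ℝ≥0∞) = ∫⁻ _, (k : ℝ≥0∞) ∂π := by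
            rw [lintegral_const, measure_univ, mul_one]
        _ ≤ _ := by
            refine lintegral_mono fun x => ?_
            exact (Nat.cast_le (α := ℝ≥0∞)).2 (count_lemma_ge x hk2)
    have hkq : (k : ℝ) ≤ ((n:ℝ) + 1) * q := by
      rw [hsum_swap] at hsum_ge
      have htop : ((n:ℝ≥0∞) + 1) * π {x | cntLT x (x (Fin.last n)) < k} ≠ ⊤ := by
        apply ENNReal.mul_ne_top (by simp)
        exact (lt_of_le_of_lt hfin ENNReal.one_lt_top).ne
      have := ENNReal.toReal_mono htop hsum_ge
      rw [ENNReal.toReal_mul] at this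
      have htr : ((n:ℝ≥0∞) + 1).toReal = (n:ℝ) + 1 := by
        rw [ENNReal.toReal_add (by simp) (by simp)]
        simp [ENNReal.toReal_natCast]
      rw [htr] at this
      simpa [hq] using this
    have hlow : 1 - α ≤ q := by nlinarith
    refine ⟨by rw [hPE]; exact hlow, ?_⟩
    -- upper bound
    intro hdist
    have hae : ∀ᵐ x ∂π, Function.Injective x := by
      have hpair : ∀ i j : Fin (n+1), i ≠ j → π {x : Fin (n+1) → ℝ | x i = x j} = 0 := by
        intro i j hij
        have hms : MeasurableSet {x : Fin (n+1) → ℝ | x i = x j} :=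
          measurableSet_eq_fun (measurable_pi_apply i) (measurable_pi_apply j)
        rw [← hmap, Measure.map_apply hR hms]
        exact hdist i j hij
      have hN : π (⋃ (p : Fin (n+1) × Fin (n+1)) (_ : p.1 ≠ p.2),
          {x : Fin (n+1) → ℝ | x p.1 = x p.2}) = 0 :=
        measure_iUnion_null fun p => measure_iUnion_null fun hp => hpair p.1 p.2 hp
      rw [MeasureTheory.ae_iff]
      refine measure_mono_null ?_ hN
      intro x hx
      simp only [Set.mem_setOf_eq] at hx
      rw [Function.Injective] at hx
      push_neg at hx
      obtain ⟨i, j, hxij, hij⟩ := hx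
      exact Set.mem_iUnion.2 ⟨(i, j), Set.mem_iUnion.2 ⟨hij, hxij⟩⟩
    have hsum_eq : ∑ j : Fin (n+1), π {x | cntLT x (x j) < k} = (k : ℝ≥0∞) := by
      rw [hlin]
      have hcong : (fun x : Fin (n+1) → ℝ =>
          ((Finset.univ.filter fun j => cntLT x (x j) < k).card : ℝ≥0∞))
          =ᵐ[π] fun _ => (k : ℝ≥0∞) := by
        filter_upwards [hae] with x hx
        rw [count_lemma_eq x hk2 hx]
      rw [lintegral_congr_ae hcong, lintegral_const, measure_univ, mul_one]
    have hkq2 : ((n:ℝ) + 1) * q = (k : ℝ) := by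
      rw [hsum_eq] at hsum_swap
      have := congrArg ENNReal.toReal hsum_swap
      rw [ENNReal.toReal_mul] at this
      have htr : ((n:ℝ≥0∞) + 1).toReal = (n:ℝ) + 1 := by
        rw [ENNReal.toReal_add (by simp) (by simp)]
        simp [ENNReal.toReal_natCast]
      rw [htr, ENNReal.toReal_natCast] at this
      simpa [hq] using this.symm
    rw [hPE]
    have : q ≤ 1 - α + 1 / ((n:ℝ) + 1) := by
      rw [← mul_le_mul_iff_of_pos_right hnpos]
      have hexp : (1 - α + 1/((n:ℝ)+1)) * ((n:ℝ)+1) = (1-α)*((n:ℝ)+1) + 1 := by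
        field_simp
      rw [hexp]
      nlinarith
    exact this
  · -- boundary case : k = n + 1, Qhat = ⊤
    have hEvent : {ω | (r (Fin.last n) ω : EReal) ≤ Qhat n α (fun i => r i.castSucc ω)}
        = Set.univ := by
      ext ω
      simp [Qhat, hQidx, dif_neg hcase, le_top]
    rw [hEvent, measure_univ, ENNReal.toReal_one]
    constructor
    · linarith
    · intro _
      have hkn : k = n + 1 := by omega
      have hngt : (n:ℝ) < (1 - α) * ((n:ℝ) + 1) := by
        by_contra h
        push_neg at h
        have hcle : c ≤ (n:ℤ) := by
          rw [hc]; exact Int.ceil_le.2 (by push_cast; linarith)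
        omega
      have h1 : α < 1 / ((n:ℝ) + 1) := by
        rw [lt_div_iff₀ hnpos]; nlinarith
      linarith
end

section
/- Let r_1,…,r_{n+1} be iid real random variables and α ∈ (0,1) with ⌈(1−α)(n+1)⌉ ≤ n. Define Q̂ = r_{(⌈(1−α)(n+1)⌉)}. Then the conditional coverage P[r_{n+1} ≤ Q̂ | r_1,…,r_n] stochastically dominates a Beta(⌈(1−α)(n+1)⌉, ⌊α(n+1)⌋) random variable, with equality in distribution if the r_i are almost surely distinct. -/
open MeasureTheory ProbabilityTheory
open scoped ENNReal

set_option linter.unusedSectionVars false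
set_option linter.unusedVariables false
section ConformalAux
open Finset

noncomputable def binTail (n k : ℕ) (p : ℝ) : ℝ :=
  ∑ j ∈ Finset.Icc k n, (n.choose j : ℝ) * p ^ j * (1 - p) ^ (n - j)

lemma hasDerivAt_term (n j : ℕ) (p : ℝ) :
    HasDerivAt (fun p : ℝ => p ^ j * (1 - p) ^ (n - j))
      ((j : ℝ) * p ^ (j - 1) * (1 - p) ^ (n - j)
        - ((n - j : ℕ) : ℝ) * p ^ j * (1 - p) ^ (n - j - 1)) p := by
  have h1 : HasDerivAt (fun p : ℝ => p ^ j) ((j : ℝ) * p ^ (j - 1)) p := hasDerivAt_pow j p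
  have h2 : HasDerivAt (fun p : ℝ => (1 - p) ^ (n - j))
      (((n - j : ℕ) : ℝ) * (1 - p) ^ (n - j - 1) * (-1)) p := by
    have := (hasDerivAt_pow (n - j) (1 - p)).comp p
      ((hasDerivAt_const p (1:ℝ)).sub (hasDerivAt_id p))
    simpa [Function.comp_def] using this
  have := h1.fun_mul h2
  convert this using 1
  · rfl
  · rfl
  · ring

lemma nat_id1 {n j : ℕ} (h1 : 1 ≤ j) (h2 : j ≤ n) :
    j * n.choose j = n * (n - 1).choose (j - 1) := by
  obtain ⟨i, rfl⟩ : ∃ i, j = i + 1 := ⟨j - 1, by omega⟩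
  obtain ⟨m, rfl⟩ : ∃ m, n = m + 1 := ⟨n - 1, by omega⟩
  simpa [Nat.mul_comm] using (Nat.add_one_mul_choose_eq m i).symm

lemma nat_id2 {n j : ℕ} (h1 : 1 ≤ n) :
    (n - j) * n.choose j = n * (n - 1).choose j := by
  obtain ⟨m, rfl⟩ : ∃ m, n = m + 1 := ⟨n - 1, by omega⟩
  have h := Nat.choose_mul_succ_eq m j
  simp only [Nat.add_sub_cancel]
  rw [Nat.mul_comm (m+1-j), Nat.mul_comm (m+1)]
  omega

example : True := trivial

lemma hasDerivAt_binTail {n k : ℕ} (h1 : 1 ≤ k) (h2 : k ≤ n) (p : ℝ) :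
    HasDerivAt (binTail n k)
      ((k : ℝ) * n.choose k * p ^ (k - 1) * (1 - p) ^ (n - k)) p := by
  set u : ℕ → ℝ := fun m => (n : ℝ) * (n - 1).choose m * p ^ m * (1 - p) ^ (n - 1 - m) with hu
  have key : ∀ j ∈ Finset.Icc k n,
      HasDerivAt (fun p : ℝ => (n.choose j : ℝ) * p ^ j * (1 - p) ^ (n - j))
        (u (j - 1) - u j) p := by
    intro j hj
    simp only [Finset.mem_Icc] at hj
    have hd := ((hasDerivAt_term n j p).const_mul (n.choose j : ℝ))
    have heq : (n.choose j : ℝ) * ((j : ℝ) * p ^ (j - 1) * (1 - p) ^ (n - j)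
        - ((n - j : ℕ) : ℝ) * p ^ j * (1 - p) ^ (n - j - 1)) = u (j - 1) - u j := by
      have e1 : ((j : ℝ)) * (n.choose j : ℝ) = (n : ℝ) * ((n - 1).choose (j - 1) : ℝ) := by
        exact_mod_cast congrArg (Nat.cast (R := ℝ)) (nat_id1 (le_trans h1 hj.1) hj.2)
      have e2 : (((n - j : ℕ)) : ℝ) * (n.choose j : ℝ)
          = (n : ℝ) * ((n - 1).choose j : ℝ) := by
        exact_mod_cast congrArg (Nat.cast (R := ℝ)) (nat_id2 (le_trans h1 (le_trans hj.1 hj.2)))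
      have e3 : n - 1 - (j - 1) = n - j := by omega
      have e4 : n - 1 - j = n - j - 1 := by omega
      simp only [hu, e3, e4]
      rw [← e1, ← e2]
      ring
    rw [← heq]
    convert hd using 2
    · rfl
    · rfl
    · ring
  have hsum : HasDerivAt (binTail n k) (∑ j ∈ Finset.Icc k n, (u (j - 1) - u j)) p := by
    exact HasDerivAt.fun_sum (A := fun j => fun p : ℝ =>
      (n.choose j : ℝ) * p ^ j * (1 - p) ^ (n - j)) key
  have htel : ∑ j ∈ Finset.Icc k n, (u (j - 1) - u j) = u (k - 1) - u n := by
    rw [← Finset.Ico_add_one_right_eq_Icc, Finset.sum_Ico_eq_sum_range]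
    have : ∀ i, u (k + i - 1) - u (k + i) = (fun m => u (k - 1 + m)) i
        - (fun m => u (k - 1 + m)) (i + 1) := by
      intro i
      have e1 : k + i - 1 = k - 1 + i := by omega
      have e2 : k + i = k - 1 + (i + 1) := by omega
      rw [e1, e2]
    simp only [this]
    rw [Finset.sum_range_sub']
    have e3 : k - 1 + (n + 1 - k) = n := by omega
    simp [e3]
  have hun : u n = 0 := by
    simp [hu, Nat.choose_eq_zero_of_lt (show n - 1 < n by omega)]
  have huk : u (k - 1) = (k : ℝ) * n.choose k * p ^ (k - 1) * (1 - p) ^ (n - k) := by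
    have e1 : (n : ℝ) * ((n - 1).choose (k - 1) : ℝ) = (k : ℝ) * (n.choose k : ℝ) := by
      exact_mod_cast congrArg (Nat.cast (R := ℝ)) (nat_id1 h1 h2).symm
    have e3 : n - 1 - (k - 1) = n - k := by omega
    simp only [hu, e3, e1]
  rw [htel, hun, huk, sub_zero] at hsum
  exact hsum

lemma binTail_zero {n k : ℕ} (h1 : 1 ≤ k) : binTail n k 0 = 0 := by
  unfold binTail
  refine Finset.sum_eq_zero fun j hj => ?_
  simp only [Finset.mem_Icc] at hj
  have : j ≠ 0 := by omega
  simp [zero_pow this]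

lemma binTail_one {n k : ℕ} (h2 : k ≤ n) : binTail n k 1 = 1 := by
  unfold binTail
  rw [Finset.sum_eq_single n]
  · simp
  · intro j hj hne
    simp only [Finset.mem_Icc] at hj
    have : n - j ≠ 0 := by omega
    simp [zero_pow this]
  · intro h
    exact absurd (Finset.mem_Icc.mpr ⟨h2, le_refl n⟩) h

lemma cont_integrand (n k : ℕ) : Continuous fun s : ℝ => s ^ (k - 1) * (1 - s) ^ (n - k) := by
  fun_prop

lemma binTail_eq_integral {n k : ℕ} (h1 : 1 ≤ k) (h2 : k ≤ n) (x : ℝ) :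
    binTail n k x
      = (k : ℝ) * n.choose k * ∫ s in (0:ℝ)..x, s ^ (k - 1) * (1 - s) ^ (n - k) := by
  have hftc : ∫ s in (0:ℝ)..x, (k : ℝ) * n.choose k * s ^ (k - 1) * (1 - s) ^ (n - k)
      = binTail n k x - binTail n k 0 := by
    refine intervalIntegral.integral_eq_sub_of_hasDerivAt
      (fun t _ => hasDerivAt_binTail h1 h2 t) ?_
    exact (by fun_prop : Continuous fun s : ℝ =>
      (k : ℝ) * n.choose k * s ^ (k - 1) * (1 - s) ^ (n - k)).intervalIntegrable _ _
  rw [binTail_zero h1, sub_zero] at hftc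
  rw [← hftc, ← intervalIntegral.integral_const_mul]
  congr 1
  ext s
  ring

lemma integral_beta_pos {n k : ℕ} (h1 : 1 ≤ k) (h2 : k ≤ n) :
    (∫ s in (0:ℝ)..1, s ^ (k - 1) * (1 - s) ^ (n - k))
      = 1 / ((k : ℝ) * n.choose k) := by
  have h := binTail_eq_integral h1 h2 1
  rw [binTail_one h2] at h
  have hpos : (k : ℝ) * n.choose k ≠ 0 := by
    have : 0 < n.choose k := Nat.choose_pos h2
    positivity
  rw [eq_div_iff hpos]
  linarith

lemma betaCDF_eq_binTail {n k : ℕ} (h1 : 1 ≤ k) (h2 : k ≤ n) (t : ℝ) :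
    betaCDF k (n + 1 - k) t = binTail n k t := by
  unfold betaCDF
  have e : n + 1 - k - 1 = n - k := by omega
  rw [e, integral_beta_pos h1 h2, binTail_eq_integral h1 h2 t]
  have hpos : (k : ℝ) * n.choose k ≠ 0 := by
    have : 0 < n.choose k := Nat.choose_pos h2
    positivity
  field_simp

lemma binTail_mono {n k : ℕ} (h1 : 1 ≤ k) (h2 : k ≤ n) {a b : ℝ}
    (ha : 0 ≤ a) (hab : a ≤ b) (hb : b ≤ 1) : binTail n k a ≤ binTail n k b := by
  rw [binTail_eq_integral h1 h2 a, binTail_eq_integral h1 h2 b]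
  have hC : (0:ℝ) ≤ (k : ℝ) * n.choose k := by positivity
  refine mul_le_mul_of_nonneg_left ?_ hC
  have hsplit : (∫ s in (0:ℝ)..a, s ^ (k-1) * (1-s) ^ (n-k))
      + (∫ s in a..b, s ^ (k-1) * (1-s) ^ (n-k))
      = ∫ s in (0:ℝ)..b, s ^ (k-1) * (1-s) ^ (n-k) :=
    intervalIntegral.integral_add_adjacent_intervals
      ((cont_integrand n k).intervalIntegrable _ _)
      ((cont_integrand n k).intervalIntegrable _ _)
  have hnn : 0 ≤ ∫ s in a..b, s ^ (k-1) * (1-s) ^ (n-k) := by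
    refine intervalIntegral.integral_nonneg hab fun s hs => ?_
    have h0 : (0:ℝ) ≤ s := le_trans ha hs.1
    have h1' : s ≤ 1 := le_trans hs.2 hb
    exact mul_nonneg (pow_nonneg h0 _) (pow_nonneg (by linarith) _)
  linarith

set_option linter.unusedSectionVars false
section CDF
variable {μ : Measure ℝ} [IsProbabilityMeasure μ]

lemma F_mono (μ : Measure ℝ) [IsFiniteMeasure μ] : Monotone (fun x => (μ (Set.Iic x)).toReal) := by
  intro a b hab
  exact ENNReal.toReal_mono (measure_ne_top μ _) (measure_mono (Set.Iic_subset_Iic.mpr hab))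

lemma mem_S_iff {t : ℝ} (ht : 0 ≤ t) {x : ℝ} :
    (μ (Set.Iic x)).toReal ≤ t ↔ μ (Set.Iic x) ≤ ENNReal.ofReal t :=
  (ENNReal.le_ofReal_iff_toReal_le (measure_ne_top μ _) ht).symm

lemma S_measurable (μ : Measure ℝ) [IsProbabilityMeasure μ] (t : ℝ) :
    MeasurableSet {x : ℝ | (μ (Set.Iic x)).toReal ≤ t} := by
  have : {x : ℝ | (μ (Set.Iic x)).toReal ≤ t}
      = (fun x => (μ (Set.Iic x)).toReal) ⁻¹' Set.Iic t := rfl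
  rw [this]
  exact (F_mono μ).measurable measurableSet_Iic

lemma S_lower {t : ℝ} {x y : ℝ} (hxy : x ≤ y)
    (hy : (μ (Set.Iic y)).toReal ≤ t) : (μ (Set.Iic x)).toReal ≤ t :=
  le_trans (F_mono μ hxy) hy

lemma tendsto_F_top :
    Filter.Tendsto (fun m : ℕ => μ (Set.Iic (m : ℝ))) Filter.atTop (nhds 1) := by
  have hmono : Monotone fun m : ℕ => Set.Iic ((m : ℝ)) := fun a b hab =>
    Set.Iic_subset_Iic.mpr (by exact_mod_cast hab)
  have hU : ⋃ m : ℕ, Set.Iic ((m : ℝ)) = Set.univ := by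
    ext x
    simp only [Set.mem_iUnion, Set.mem_Iic, Set.mem_univ, iff_true]
    exact exists_nat_ge x
  have := tendsto_measure_iUnion_atTop (μ := μ) hmono
  rw [hU] at this
  simpa [Function.comp_def] using this

lemma tendsto_F_bot :
    Filter.Tendsto (fun m : ℕ => μ (Set.Iic (-(m : ℝ)))) Filter.atTop (nhds 0) := by
  have hanti : Antitone fun m : ℕ => Set.Iic (-(m : ℝ)) := fun a b hab =>
    Set.Iic_subset_Iic.mpr (by exact_mod_cast neg_le_neg (by exact_mod_cast hab))
  have hI : ⋂ m : ℕ, Set.Iic (-(m : ℝ)) = ∅ := by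
    ext x
    simp only [Set.mem_iInter, Set.mem_Iic, Set.mem_empty_iff_false, iff_false, not_forall]
    obtain ⟨m, hm⟩ := exists_nat_gt (-x)
    exact ⟨m, by push_neg; linarith⟩
  have := tendsto_measure_iInter_atTop (μ := μ)
    (fun m => (measurableSet_Iic).nullMeasurableSet) hanti ⟨0, measure_ne_top μ _⟩
  rw [hI] at this
  simpa [Function.comp_def] using this

lemma measure_Iio_eq_iSup (s : ℝ) :
    μ (Set.Iio s) = ⨆ m : ℕ, μ (Set.Iic (s - 1 / (m + 1))) := by
  have hmono : Monotone fun m : ℕ => Set.Iic (s - 1 / ((m : ℝ) + 1)) := by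
    intro a b hab
    apply Set.Iic_subset_Iic.mpr
    have : (1:ℝ) / (b + 1) ≤ 1 / (a + 1) := by
      apply one_div_le_one_div_of_le (by positivity)
      exact_mod_cast by exact_mod_cast add_le_add_left (Nat.cast_le.mpr hab) 1
    linarith
  have hU : ⋃ m : ℕ, Set.Iic (s - 1 / ((m : ℝ) + 1)) = Set.Iio s := by
    ext x
    simp only [Set.mem_iUnion, Set.mem_Iic, Set.mem_Iio]
    constructor
    · rintro ⟨m, hm⟩
      have : (0:ℝ) < 1 / ((m:ℝ) + 1) := by positivity
      linarith
    · intro hx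
      obtain ⟨m, hm⟩ := exists_nat_one_div_lt (show (0:ℝ) < s - x by linarith)
      exact ⟨m, by linarith⟩
  rw [← hU, hmono.measure_iUnion]

lemma measure_Iic_eq_iInf (s : ℝ) :
    μ (Set.Iic s) = ⨅ m : ℕ, μ (Set.Iic (s + 1 / (m + 1))) := by
  have hanti : Antitone fun m : ℕ => Set.Iic (s + 1 / ((m : ℝ) + 1)) := by
    intro a b hab
    apply Set.Iic_subset_Iic.mpr
    have : (1:ℝ) / (b + 1) ≤ 1 / (a + 1) := by
      apply one_div_le_one_div_of_le (by positivity)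
      exact_mod_cast by exact_mod_cast add_le_add_left (Nat.cast_le.mpr hab) 1
    linarith
  have hI : ⋂ m : ℕ, Set.Iic (s + 1 / ((m : ℝ) + 1)) = Set.Iic s := by
    ext x
    simp only [Set.mem_iInter, Set.mem_Iic]
    constructor
    · intro h
      by_contra hx
      push_neg at hx
      obtain ⟨m, hm⟩ := exists_nat_one_div_lt (show (0:ℝ) < x - s by linarith)
      have := h m
      linarith
    · intro hx m
      have : (0:ℝ) < 1 / ((m:ℝ) + 1) := by positivity
      linarith
  rw [← hI, hanti.measure_iInter (fun m => (measurableSet_Iic).nullMeasurableSet)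
    ⟨0, measure_ne_top μ _⟩]

end CDF

section CDF2
variable {μ : Measure ℝ} [IsProbabilityMeasure μ]

lemma measure_Iio_sSup_le {t : ℝ} (ht0 : 0 ≤ t)
    (hne : {x : ℝ | (μ (Set.Iic x)).toReal ≤ t}.Nonempty)
    (hbdd : BddAbove {x : ℝ | (μ (Set.Iic x)).toReal ≤ t}) :
    μ (Set.Iio (sSup {x : ℝ | (μ (Set.Iic x)).toReal ≤ t})) ≤ ENNReal.ofReal t := by
  set S := {x : ℝ | (μ (Set.Iic x)).toReal ≤ t} with hS
  set s := sSup S with hs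
  rw [measure_Iio_eq_iSup]
  refine iSup_le fun m => ?_
  have hlt : s - 1 / ((m:ℝ) + 1) < s := by
    have : (0:ℝ) < 1 / ((m:ℝ) + 1) := by positivity
    linarith
  obtain ⟨x, hxS, hxgt⟩ := exists_lt_of_lt_csSup hne hlt
  have : μ (Set.Iic (s - 1 / ((m:ℝ) + 1))) ≤ μ (Set.Iic x) :=
    measure_mono (Set.Iic_subset_Iic.mpr hxgt.le)
  exact le_trans this ((mem_S_iff ht0).mp hxS)

lemma measure_S_le {t : ℝ} (ht0 : 0 ≤ t) (ht1 : t ≤ 1) :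
    μ {x : ℝ | (μ (Set.Iic x)).toReal ≤ t} ≤ ENNReal.ofReal t := by
  set S := {x : ℝ | (μ (Set.Iic x)).toReal ≤ t} with hS
  rcases Set.eq_empty_or_nonempty S with hemp | hne
  · simp [hemp]
  by_cases hbdd : BddAbove S
  · set s := sSup S with hs
    by_cases hFs : (μ (Set.Iic s)).toReal ≤ t
    · calc μ S ≤ μ (Set.Iic s) := measure_mono fun x hx => le_csSup hbdd hx
        _ ≤ ENNReal.ofReal t := (mem_S_iff ht0).mp hFs
    · have hsub : S ⊆ Set.Iio s := by
        intro x hx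
        rcases lt_or_eq_of_le (le_csSup hbdd hx) with h | h
        · exact h
        · subst h; exact absurd hx hFs
      exact le_trans (measure_mono hsub) (measure_Iio_sSup_le ht0 hne hbdd)
  · -- unbounded: S = univ, so F ≤ t everywhere, so 1 ≤ ofReal t
    have hall : ∀ x : ℝ, (μ (Set.Iic x)).toReal ≤ t := by
      intro x
      rw [not_bddAbove_iff] at hbdd
      obtain ⟨y, hyS, hxy⟩ := hbdd x
      exact S_lower hxy.le hyS
    have h1 : (1 : ℝ≥0∞) ≤ ENNReal.ofReal t := by
      refine le_of_tendsto' (tendsto_F_top (μ := μ)) fun m => ?_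
      exact (mem_S_iff ht0).mp (hall _)
    calc μ S ≤ 1 := prob_le_one
      _ ≤ ENNReal.ofReal t := h1

lemma measure_S_eq (hatom : ∀ a : ℝ, μ {a} = 0) {t : ℝ} (ht0 : 0 ≤ t) (ht1 : t ≤ 1) :
    μ {x : ℝ | (μ (Set.Iic x)).toReal ≤ t} = ENNReal.ofReal t := by
  refine le_antisymm (measure_S_le ht0 ht1) ?_
  set S := {x : ℝ | (μ (Set.Iic x)).toReal ≤ t} with hS
  rcases Set.eq_empty_or_nonempty S with hemp | hne
  · -- F x > t for all x; limit at -∞ gives ofReal t ≤ 0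
    have hall : ∀ m : ℕ, ENNReal.ofReal t ≤ μ (Set.Iic (-(m:ℝ))) := by
      intro m
      by_contra h
      push_neg at h
      have : (-(m:ℝ)) ∈ S := (mem_S_iff ht0).mpr h.le
      simp [hemp] at this
    have h0 : ENNReal.ofReal t ≤ 0 := ge_of_tendsto' (tendsto_F_bot (μ := μ)) hall
    simpa [hemp] using h0
  by_cases hbdd : BddAbove S
  · set s := sSup S with hs
    have hIio : μ (Set.Iio s) ≤ ENNReal.ofReal t := measure_Iio_sSup_le ht0 hne hbdd
    have hIic_le : μ (Set.Iic s) ≤ ENNReal.ofReal t := by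
      have : Set.Iic s = Set.Iio s ∪ {s} := by
        ext x; simp [le_iff_lt_or_eq]
      rw [this]
      calc μ (Set.Iio s ∪ {s}) ≤ μ (Set.Iio s) + μ {s} := measure_union_le _ _
        _ = μ (Set.Iio s) := by rw [hatom s, add_zero]
        _ ≤ ENNReal.ofReal t := hIio
    have hsmem : s ∈ S := (mem_S_iff ht0).mpr hIic_le
    have hsubset : Set.Iic s ⊆ S := fun x hx => S_lower hx hsmem
    have hge : ENNReal.ofReal t ≤ μ (Set.Iic s) := by
      rw [measure_Iic_eq_iInf]
      refine le_iInf fun m => ?_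
      have hnot : s + 1 / ((m:ℝ) + 1) ∉ S := by
        intro hmem
        have hle := le_csSup hbdd hmem
        have : (0:ℝ) < 1 / ((m:ℝ) + 1) := by positivity
        linarith
      by_contra h
      push_neg at h
      exact hnot ((mem_S_iff ht0).mpr h.le)
    exact le_trans hge (measure_mono hsubset)
  · -- unbounded: S = univ
    have hall : S = Set.univ := by
      ext x
      simp only [Set.mem_univ, iff_true]
      rw [not_bddAbove_iff] at hbdd
      obtain ⟨y, hyS, hxy⟩ := hbdd x
      exact S_lower hxy.le hyS
    rw [hall, measure_univ]
    exact ENNReal.ofReal_le_one.mpr ht1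

end CDF2

open scoped Classical in
lemma mono_le_iff_card {n : ℕ} {z : Fin n → ℝ} (hz : Monotone z) (j : Fin n) (t : ℝ) :
    z j ≤ t ↔ (j : ℕ) < (Finset.univ.filter fun i => z i ≤ t).card := by
  constructor
  · intro h
    have hsub : Finset.Iic j ⊆ Finset.univ.filter fun i => z i ≤ t := by
      intro i hi
      simp only [Finset.mem_Iic] at hi
      simp only [Finset.mem_filter, Finset.mem_univ, true_and]
      exact le_trans (hz hi) h
    have := Finset.card_le_card hsub
    rw [Fin.card_Iic] at this
    omega
  · intro h
    by_contra hnot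
    push_neg at hnot
    have hsub : (Finset.univ.filter fun i => z i ≤ t) ⊆ Finset.Iio j := by
      intro i hi
      simp only [Finset.mem_filter, Finset.mem_univ, true_and] at hi
      simp only [Finset.mem_Iio]
      by_contra hij
      push_neg at hij
      exact absurd (le_trans (hz hij) hi) (not_le.mpr hnot)
    have := Finset.card_le_card hsub
    rw [Fin.card_Iio] at this
    omega

open scoped Classical in
lemma card_filter_comp_perm {n : ℕ} (σ : Equiv.Perm (Fin n)) (p : Fin n → Prop) :
    (Finset.univ.filter fun i => p (σ i)).card = (Finset.univ.filter p).card := by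
  refine Finset.card_bij' (fun i _ => σ i) (fun i _ => σ.symm i) ?_ ?_ ?_ ?_ <;>
    simp [Finset.mem_filter]

open scoped Classical in
lemma orderStat_le_iff {n k : ℕ} (hk1 : 1 ≤ k) (hkn : k ≤ n) (x : Fin n → ℝ)
    {F : ℝ → ℝ} (hF : Monotone F) (t : ℝ) (hpf : k - 1 < n) :
    F (orderStat x ⟨k - 1, hpf⟩) ≤ t ↔
      k ≤ (Finset.univ.filter fun i => F (x i) ≤ t).card := by
  have hz : Monotone (fun i => F (x (Tuple.sort x i))) := by
    have := Tuple.monotone_sort x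
    exact hF.comp this
  have h1 := mono_le_iff_card hz ⟨k - 1, hpf⟩ t
  have h2 : (Finset.univ.filter fun i => F (x (Tuple.sort x i)) ≤ t).card
      = (Finset.univ.filter fun i => F (x i) ≤ t).card :=
    card_filter_comp_perm (Tuple.sort x) (fun i => F (x i) ≤ t)
  unfold orderStat
  rw [h1, h2]
  simp only [Fin.val_mk]
  omega

open scoped Classical in
lemma prob_count_ge {Ω : Type*} [MeasurableSpace Ω] (P : Measure Ω) [IsProbabilityMeasure P]
    (n : ℕ) (r : Fin (n + 1) → Ω → ℝ) (hr : ∀ i, Measurable (r i))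
    (μ : Measure ℝ) [IsProbabilityMeasure μ]
    (hindep : iIndepFun r P)
    (hid : ∀ i, Measure.map (r i) P = μ)
    {S : Set ℝ} (hSm : MeasurableSet S) (k : ℕ) :
    P {ω | k ≤ (Finset.univ.filter fun j : Fin n => r j.castSucc ω ∈ S).card}
      = ∑ j ∈ Finset.Icc k n, (n.choose j : ℝ≥0∞) * (μ S) ^ j * (μ Sᶜ) ^ (n - j) := by
  set E : Finset (Fin n) → Set Ω :=
    fun A => {ω | (Finset.univ.filter fun j : Fin n => r j.castSucc ω ∈ S) = A} with hE
  set F : Finset (Finset (Fin n)) :=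
    Finset.univ.powerset.filter (fun A => k ≤ A.card) with hF
  -- step: P (E A) = μ S ^ |A| * μ Sᶜ ^ (n - |A|)
  have hPE : ∀ A : Finset (Fin n),
      P (E A) = (μ S) ^ A.card * (μ Sᶜ) ^ (n - A.card) := by
    intro A
    set sets : Fin (n + 1) → Set ℝ := fun i =>
      if h : (i : ℕ) < n then (if (⟨(i : ℕ), h⟩ : Fin n) ∈ A then S else Sᶜ) else Set.univ
      with hsets
    have hsets_meas : ∀ i, MeasurableSet (sets i) := by
      intro i
      simp only [hsets]
      split_ifs
      · exact hSm
      · exact hSm.compl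
      · exact MeasurableSet.univ
    have hsets_cast : ∀ j : Fin n, sets j.castSucc = if j ∈ A then S else Sᶜ := by
      intro j
      have hj : ((j.castSucc : Fin (n + 1)) : ℕ) < n := j.isLt
      simp only [hsets, dif_pos hj]
      congr 1
    have hEA : E A = ⋂ i ∈ (Finset.univ : Finset (Fin (n + 1))), r i ⁻¹' sets i := by
      ext ω
      simp only [hE, Set.mem_setOf_eq, Set.mem_iInter, Set.mem_preimage, Finset.mem_univ,
        Set.mem_iInter]
      constructor
      · intro h i _
        by_cases hi : (i : ℕ) < n
        · obtain ⟨j, rfl⟩ : ∃ j : Fin n, i = j.castSucc :=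
            ⟨⟨(i : ℕ), hi⟩, by apply Fin.ext; simp⟩
          rw [hsets_cast]
          have hj := Finset.ext_iff.mp h j
          simp only [Finset.mem_filter, Finset.mem_univ, true_and] at hj
          split_ifs with hA
          · exact hj.mpr hA
          · exact fun hS' => hA (hj.mp hS')
        · simp only [hsets, dif_neg hi]
          trivial
      · intro h
        ext j
        simp only [Finset.mem_filter, Finset.mem_univ, true_and]
        have hj := h j.castSucc trivial
        rw [hsets_cast] at hj
        split_ifs at hj with hA
        · exact ⟨fun _ => hA, fun _ => hj⟩
        · exact ⟨fun hS' => absurd hS' hj, fun hA' => absurd hA' hA⟩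
    have hprod := hindep.measure_inter_preimage_eq_mul (Finset.univ : Finset (Fin (n + 1)))
      (sets := sets) (fun i _ => hsets_meas i)
    have hmap : ∀ i, P (r i ⁻¹' sets i) = μ (sets i) := by
      intro i
      rw [← hid i, Measure.map_apply (hr i) (hsets_meas i)]
    rw [hEA, hprod]
    simp_rw [hmap]
    rw [Fin.prod_univ_castSucc]
    have hlast : sets (Fin.last n) = Set.univ := by
      simp only [hsets, Fin.val_last]
      rw [dif_neg (lt_irrefl n)]
    rw [hlast, measure_univ, mul_one]
    simp_rw [hsets_cast]
    simp only [apply_ite μ]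
    rw [Finset.prod_ite, Finset.prod_const, Finset.prod_const]
    congr 2
    · rw [Finset.filter_univ_mem]
    · have : Finset.univ.filter (fun j => j ∉ A) = Aᶜ := by
        ext j; simp
      rw [this, Finset.card_compl, Fintype.card_fin]
  -- step: the event is a disjoint union
  have hunion : {ω | k ≤ (Finset.univ.filter fun j : Fin n => r j.castSucc ω ∈ S).card}
      = ⋃ A ∈ F, E A := by
    ext ω
    simp only [Set.mem_setOf_eq, Set.mem_iUnion, hE, hF, Finset.mem_filter,
      Finset.mem_powerset, Set.mem_setOf_eq]
    constructor
    · intro h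
      exact ⟨_, ⟨⟨Finset.subset_univ _, h⟩, rfl⟩⟩
    · rintro ⟨A, ⟨⟨-, hcard⟩, hfA⟩⟩
      rw [hfA]; exact hcard
  have hdisj : (F : Set (Finset (Fin n))).PairwiseDisjoint E := by
    intro A _ B _ hAB
    rw [Function.onFun, Set.disjoint_left]
    intro ω hA hB
    exact hAB (hA ▸ hB ▸ rfl)
  have hEmeas : ∀ A : Finset (Fin n), MeasurableSet (E A) := by
    intro A
    have : E A = ⋂ j : Fin n,
        (r j.castSucc) ⁻¹' (if j ∈ A then S else Sᶜ) := by
      ext ω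
      simp only [hE, Set.mem_setOf_eq, Set.mem_iInter, Set.mem_preimage]
      constructor
      · intro h j
        have hj := Finset.ext_iff.mp h j
        simp only [Finset.mem_filter, Finset.mem_univ, true_and] at hj
        split_ifs with hA
        · exact hj.mpr hA
        · exact fun hS' => hA (hj.mp hS')
      · intro h
        ext j
        simp only [Finset.mem_filter, Finset.mem_univ, true_and]
        have hj := h j
        split_ifs at hj with hA
        · exact ⟨fun _ => hA, fun _ => hj⟩
        · exact ⟨fun hS' => absurd hS' hj, fun hA' => absurd hA' hA⟩
    rw [this]
    refine MeasurableSet.iInter fun j => (hr _) ?_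
    split_ifs
    · exact hSm
    · exact hSm.compl
  rw [hunion, measure_biUnion_finset hdisj fun A _ => hEmeas A]
  simp_rw [hPE]
  -- group by cardinality
  have hFgroup : F = (Finset.Icc k n).biUnion (fun j => Finset.powersetCard j Finset.univ) := by
    ext A
    simp only [hF, Finset.mem_filter, Finset.mem_powerset, Finset.mem_biUnion, Finset.mem_Icc,
      Finset.mem_powersetCard]
    constructor
    · intro ⟨hsub, hcard⟩
      refine ⟨A.card, ⟨hcard, ?_⟩, hsub, rfl⟩
      simpa using Finset.card_le_univ A
    · rintro ⟨j, ⟨hkj, -⟩, hsub, rfl⟩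
      exact ⟨hsub, hkj⟩
  rw [hFgroup, Finset.sum_biUnion]
  · refine Finset.sum_congr rfl fun j hj => ?_
    have : ∀ A ∈ Finset.powersetCard j (Finset.univ : Finset (Fin n)),
        (μ S) ^ A.card * (μ Sᶜ) ^ (n - A.card) = (μ S) ^ j * (μ Sᶜ) ^ (n - j) := by
      intro A hA
      rw [Finset.mem_powersetCard] at hA
      rw [hA.2]
    rw [Finset.sum_congr rfl this, Finset.sum_const, Finset.card_powersetCard,
      Finset.card_univ, Fintype.card_fin, nsmul_eq_mul, mul_assoc]
  · intro a _ b _ hab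
    rw [Function.onFun, Finset.disjoint_left]
    intro A hA hB
    rw [Finset.mem_powersetCard] at hA hB
    exact hab (hA.2 ▸ hB.2 ▸ rfl)

open scoped Classical in
lemma main_prob_eq {Ω : Type*} [MeasurableSpace Ω] (P : Measure Ω) [IsProbabilityMeasure P]
    {n k : ℕ} (hk1 : 1 ≤ k) (hkn : k ≤ n) (hpf : k - 1 < n)
    (r : Fin (n + 1) → Ω → ℝ) (hr : ∀ i, Measurable (r i))
    (μ : Measure ℝ) [IsProbabilityMeasure μ]
    (hindep : iIndepFun r P)
    (hid : ∀ i, Measure.map (r i) P = μ) (t : ℝ) (ht0 : 0 ≤ t) :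
    (P {ω | (μ (Set.Iic (orderStat (fun i : Fin n => r i.castSucc ω)
        ⟨k - 1, hpf⟩))).toReal ≤ t}).toReal
      = binTail n k (μ {x : ℝ | (μ (Set.Iic x)).toReal ≤ t}).toReal := by
  set St : Set ℝ := {x : ℝ | (μ (Set.Iic x)).toReal ≤ t} with hSt
  have hev : {ω | (μ (Set.Iic (orderStat (fun i : Fin n => r i.castSucc ω)
        ⟨k - 1, hpf⟩))).toReal ≤ t}
      = {ω | k ≤ (Finset.univ.filter fun j : Fin n => r j.castSucc ω ∈ St).card} := by
    ext ω
    simp only [Set.mem_setOf_eq]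
    rw [orderStat_le_iff hk1 hkn (fun i : Fin n => r i.castSucc ω) (F_mono μ) t hpf]
    constructor <;> intro h <;> refine le_trans h (le_of_eq ?_) <;>
      exact congrArg Finset.card (Finset.filter_congr fun i _ => Iff.rfl)
  rw [hev, prob_count_ge P n r hr μ hindep hid (S_measurable μ t) k]
  have hp1 : μ St ≤ 1 := prob_le_one
  have hq : μ Stᶜ = 1 - μ St :=
    measure_compl (S_measurable μ t) (measure_ne_top _ _) |>.trans (by rw [measure_univ])
  have hqr : (μ Stᶜ).toReal = 1 - (μ St).toReal := by
    rw [hq, ENNReal.toReal_sub_of_le hp1 ENNReal.one_ne_top, ENNReal.toReal_one]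
  rw [ENNReal.toReal_sum]
  · unfold binTail
    refine Finset.sum_congr rfl fun j hj => ?_
    rw [ENNReal.toReal_mul, ENNReal.toReal_mul, ENNReal.toReal_pow, ENNReal.toReal_pow,
      ENNReal.toReal_natCast, hqr]
  · intro j hj
    exact ENNReal.mul_ne_top
      (ENNReal.mul_ne_top (ENNReal.natCast_ne_top _)
        (ENNReal.pow_ne_top (ne_top_of_le_ne_top ENNReal.one_ne_top hp1)))
      (ENNReal.pow_ne_top (ne_top_of_le_ne_top ENNReal.one_ne_top (hq ▸ le_trans
        tsub_le_self le_rfl)))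

example : True := trivial


end ConformalAux

/-- Distribution of conformal coverage: for iid scores `r_1,…,r_{n+1}` with common law `μ`
and `Q̂ = r_{(⌈(1-α)(n+1)⌉)}`, the conditional coverage `P[r_{n+1} ≤ Q̂ | r_1,…,r_n]`
stochastically dominates a `Beta(⌈(1-α)(n+1)⌉, ⌊α(n+1)⌋)` random variable, with equality
in distribution if the scores are almost surely distinct. -/
theorem conformal_coverage_dominates_beta
    {Ω : Type*} [MeasurableSpace Ω] (P : Measure Ω) [IsProbabilityMeasure P]
    (n : ℕ) (hn : 1 ≤ n) (r : Fin (n + 1) → Ω → ℝ) (hr : ∀ i, Measurable (r i))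
    (μ : Measure ℝ) [IsProbabilityMeasure μ]
    (hindep : iIndepFun r P)
    (hid : ∀ i, Measure.map (r i) P = μ)
    (α : ℝ) (hα : α ∈ Set.Ioo (0:ℝ) 1)
    (hk : (⌈(1 - α) * (n + 1 : ℝ)⌉).toNat ≤ n) :
    (∀ t ∈ Set.Icc (0:ℝ) 1,
        (P {ω |
            (μ (Set.Iic (orderStat (fun i : Fin n => r i.castSucc ω)
                ⟨(⌈(1 - α) * (n + 1 : ℝ)⌉).toNat - 1, by omega⟩))).toReal ≤ t}).toReal
          ≤ betaCDF (⌈(1 - α) * (n + 1 : ℝ)⌉).toNat (⌊α * (n + 1 : ℝ)⌋).toNat t) ∧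
      ((∀ i j : Fin (n + 1), i ≠ j → P {ω | r i ω = r j ω} = 0) →
        ∀ t ∈ Set.Icc (0:ℝ) 1,
          (P {ω |
              (μ (Set.Iic (orderStat (fun i : Fin n => r i.castSucc ω)
                  ⟨(⌈(1 - α) * (n + 1 : ℝ)⌉).toNat - 1, by omega⟩))).toReal ≤ t}).toReal
            = betaCDF (⌈(1 - α) * (n + 1 : ℝ)⌉).toNat (⌊α * (n + 1 : ℝ)⌋).toNat t) := by
  have hceil_pos : 0 < ⌈(1 - α) * (n + 1 : ℝ)⌉ := by
    refine Int.ceil_pos.mpr (mul_pos (by linarith [hα.2]) (by positivity))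
  set k : ℕ := (⌈(1 - α) * (n + 1 : ℝ)⌉).toNat with hkdef
  have hk1 : 1 ≤ k := by omega
  have hkn : k ≤ n := hk
  have hpf : k - 1 < n := by omega
  have hfloor : ⌊α * (n + 1 : ℝ)⌋ = (n + 1 : ℤ) - ⌈(1 - α) * (n + 1 : ℝ)⌉ := by
    have heq : α * (n + 1 : ℝ) = (((n : ℤ) + 1 : ℤ) : ℝ) + (-((1 - α) * (n + 1 : ℝ))) := by
      push_cast; ring
    rw [heq, Int.floor_intCast_add, Int.floor_neg]
    push_cast; ring
  have hbval : (⌊α * (n + 1 : ℝ)⌋).toNat = n + 1 - k := by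
    have h1 : (⌈(1 - α) * (n + 1 : ℝ)⌉ : ℤ) = (k : ℤ) := by omega
    omega
  have hbeta : ∀ t : ℝ, betaCDF k (⌊α * (n + 1 : ℝ)⌋).toNat t = binTail n k t := by
    intro t
    rw [hbval]
    exact betaCDF_eq_binTail hk1 hkn t
  constructor
  · intro t ht
    rw [main_prob_eq P hk1 hkn hpf r hr μ hindep hid t ht.1, hbeta t]
    have hple : (μ {x : ℝ | (μ (Set.Iic x)).toReal ≤ t}).toReal ≤ t := by
      have := measure_S_le (μ := μ) ht.1 ht.2
      calc (μ {x : ℝ | (μ (Set.Iic x)).toReal ≤ t}).toReal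
          ≤ (ENNReal.ofReal t).toReal := ENNReal.toReal_mono ENNReal.ofReal_ne_top this
        _ = t := ENNReal.toReal_ofReal ht.1
    exact binTail_mono hk1 hkn ENNReal.toReal_nonneg hple ht.2
  · intro hdist t ht
    have hatom : ∀ a : ℝ, μ {a} = 0 := by
      intro a
      by_contra hne
      have h01 : (0 : Fin (n + 1)) ≠ 1 := by
        have : (1 : ℕ) < n + 1 := by omega
        intro h
        have := congrArg Fin.val h
        simp [Fin.val_one'] at this
        omega
      have hind2 := hindep.indepFun h01
      have hmul := hind2.measure_inter_preimage_eq_mul (μ := P) {a} {a}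
        (measurableSet_singleton a) (measurableSet_singleton a)
      have hmap0 : P (r 0 ⁻¹' {a}) = μ {a} := by
        rw [← hid 0, Measure.map_apply (hr 0) (measurableSet_singleton a)]
      have hmap1 : P (r 1 ⁻¹' {a}) = μ {a} := by
        rw [← hid 1, Measure.map_apply (hr 1) (measurableSet_singleton a)]
      have hsub : r 0 ⁻¹' {a} ∩ r 1 ⁻¹' {a} ⊆ {ω | r 0 ω = r 1 ω} := by
        rintro ω ⟨h0, h1⟩
        simp only [Set.mem_preimage, Set.mem_singleton_iff] at h0 h1
        simp [Set.mem_setOf_eq, h0, h1]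
      have hle := measure_mono (μ := P) hsub
      rw [hdist 0 1 h01] at hle
      rw [hmul, hmap0, hmap1] at hle
      have := le_antisymm hle (zero_le)
      exact hne (by
        rcases mul_eq_zero.mp this with h | h
        · exact h
        · exact h)
    rw [main_prob_eq P hk1 hkn hpf r hr μ hindep hid t ht.1, hbeta t]
    rw [measure_S_eq hatom ht.1 ht.2, ENNReal.toReal_ofReal ht.1]
end

section
/- Let r_1,…,r_{n+1} be iid, ε, δ ∈ (0,1), and α ∈ (0,1) satisfy δ ≥ Bin(⌊α(n+1)−1⌋; n, ε). Then the prediction rule r_{n+1} ≤ r_{(⌈(1−α)(n+1)⌉)} is an (ε,δ)-tolerance region: with probability at least 1−δ over r_1,…,r_n, the conditional probability P[r_{n+1} ≤ r_{(⌈(1−α)(n+1)⌉)} | r_1,…,r_n] is at least 1−ε. -/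
open MeasureTheory ProbabilityTheory
open scoped ENNReal

lemma hasDerivAt_binCDF (N k : ℕ) (hk : k ≤ N) (s : ℝ) :
    HasDerivAt (binCDF (N+1) k)
      (-(((N:ℝ)+1) * (N.choose k)) * (s ^ k * (1 - s) ^ (N - k))) s := by
  induction k with
  | zero =>
      have h1 : (binCDF (N+1) 0) = fun p : ℝ => (1 - p) ^ (N+1) := by
        funext p; simp [binCDF]
      rw [h1]
      have := ((hasDerivAt_id s).const_sub 1).fun_pow (N+1)
      refine this.congr_deriv (Eq.symm ?_)
      push_cast
      ring_nf
      simp [mul_comm]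
  | succ k ih =>
      have hk' : k ≤ N := Nat.le_of_succ_le hk
      have hkN : k < N := hk
      have h1 : (binCDF (N+1) (k+1)) = fun p : ℝ =>
          binCDF (N+1) k p + ((N+1).choose (k+1) : ℝ) * (p ^ (k+1) * (1 - p) ^ (N - k)) := by
        funext p; simp [binCDF, Finset.sum_range_succ]; ring
      rw [h1]
      have h2 : HasDerivAt (fun p : ℝ => p ^ (k+1)) (((k:ℝ)+1) * s ^ k) s := by
        simpa using hasDerivAt_pow (k+1) s
      have h3 : HasDerivAt (fun p : ℝ => (1 - p) ^ (N - k))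
          (((N - k : ℕ) : ℝ) * (1 - s) ^ (N - k - 1) * (-1)) s := by
        simpa using (((hasDerivAt_id s).const_sub 1).fun_pow (N - k))
      have hterm := (h2.mul h3).const_mul (((N+1).choose (k+1) : ℝ))
      have := (ih hk').add hterm
      refine this.congr_deriv (Eq.symm ?_)
      have c1 : (((k:ℝ)+1) * ((N+1).choose (k+1) : ℝ)) = ((N:ℝ)+1) * (N.choose k : ℝ) := by
        have hnat : (k+1) * ((N+1).choose (k+1)) = (N+1) * (N.choose k) := by
          rw [mul_comm]; exact (Nat.add_one_mul_choose_eq N k).symm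
        exact_mod_cast hnat
      have c2 : (((N+1).choose (k+1) : ℝ)) * ((N - k : ℕ) : ℝ) = ((N:ℝ)+1) * (N.choose (k+1) : ℝ) := by
        have e1 := Nat.choose_succ_right_eq (N+1) (k+1)
        have e2 := Nat.add_one_mul_choose_eq N (k+1)
        have e3 : N + 1 - (k + 1) = N - k := by omega
        rw [e3] at e1
        have : ((N+1).choose (k+1)) * (N - k) = (N+1) * (N.choose (k+1)) := by
          rw [← e1, e2]
        exact_mod_cast this
      have e4 : N - k = (N - (k+1)) + 1 := by omega
      have hcast : ((N - (k+1) + 1 : ℕ) : ℝ) = ((N - k : ℕ) : ℝ) := by rw [← e4]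
      rw [e4]
      simp only [Nat.add_sub_cancel, hcast, pow_succ]
      set t := (1 - s) ^ (N - (k+1))
      linear_combination (-(s^k * t * (1-s))) * c1 + (s^(k+1) * t) * c2

lemma binCDF_antitoneOn (N k : ℕ) (hk : k ≤ N) :
    AntitoneOn (binCDF (N+1) k) (Set.Icc (0:ℝ) 1) := by
  apply antitoneOn_of_deriv_nonpos (convex_Icc 0 1)
  · exact fun x _ => (hasDerivAt_binCDF N k hk x).differentiableAt.continuousAt.continuousWithinAt
  · exact fun x _ => (hasDerivAt_binCDF N k hk x).differentiableAt.differentiableWithinAt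
  · intro x hx
    rw [interior_Icc, Set.mem_Ioo] at hx
    rw [(hasDerivAt_binCDF N k hk x).deriv]
    apply mul_nonpos_of_nonpos_of_nonneg
    · have : (0:ℝ) ≤ ((N:ℝ)+1) * (N.choose k) := by positivity
      linarith
    · have h1 : (0:ℝ) ≤ 1 - x := by linarith [hx.2]
      exact mul_nonneg (pow_nonneg hx.1.le _) (pow_nonneg h1 _)


lemma count_of_orderStat_lt {n m : ℕ} (x : Fin n → ℝ) (t₀ : ℝ) (h : m < n)
    (hlt : orderStat x ⟨m, h⟩ < t₀) :
    m + 1 ≤ (Finset.univ.filter fun i => x i < t₀).card := by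
  classical
  set σ := Tuple.sort x
  have hmono := Tuple.monotone_sort x
  have hsub : (Finset.Iic (⟨m, h⟩ : Fin n)).image σ ⊆
      Finset.univ.filter fun i => x i < t₀ := by
    intro j hj
    rw [Finset.mem_image] at hj
    obtain ⟨i, hi, rfl⟩ := hj
    rw [Finset.mem_Iic] at hi
    have : x (σ i) ≤ x (σ ⟨m, h⟩) := hmono hi
    simp only [Finset.mem_filter, Finset.mem_univ, true_and]
    exact lt_of_le_of_lt this hlt
  have hcard : ((Finset.Iic (⟨m, h⟩ : Fin n)).image σ).card = m + 1 := by
    rw [Finset.card_image_of_injective _ σ.injective]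
    simp [Fin.card_Iic]
  calc m + 1 = ((Finset.Iic (⟨m, h⟩ : Fin n)).image σ).card := hcard.symm
    _ ≤ _ := Finset.card_le_card hsub

lemma measure_count_ge {Ω : Type*} [MeasurableSpace Ω] (P : Measure Ω)
    {n : ℕ} (x : Fin n → Ω → ℝ) (hx : ∀ i, Measurable (x i)) (t₀ : ℝ)
    (pE qE : ℝ≥0∞)
    (hprod : ∀ A : Finset (Fin n),
      P {ω | ∀ i : Fin n, (x i ω < t₀ ↔ i ∈ A)} = pE ^ A.card * qE ^ (n - A.card))
    (m : ℕ) :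
    P {ω | m + 1 ≤ (Finset.univ.filter fun i => x i ω < t₀).card}
      = ∑ c ∈ Finset.Icc (m+1) n, (n.choose c : ℝ≥0∞) * (pE ^ c * qE ^ (n - c)) := by
  classical
  set T : Ω → Finset (Fin n) := fun ω => Finset.univ.filter fun i => x i ω < t₀ with hT
  set E : Finset (Fin n) → Set Ω := fun A => {ω | ∀ i : Fin n, (x i ω < t₀ ↔ i ∈ A)} with hE
  have hmemE : ∀ ω A, ω ∈ E A ↔ T ω = A := by
    intro ω A
    simp only [hE, Set.mem_setOf_eq, hT, Finset.ext_iff, Finset.mem_filter, Finset.mem_univ,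
      true_and]
  have hEset : ∀ A, E A = ⋂ i : Fin n, x i ⁻¹' (if i ∈ A then Set.Iio t₀ else Set.Ici t₀) := by
    intro A
    ext ω
    simp only [hE, Set.mem_setOf_eq, Set.mem_iInter, Set.mem_preimage]
    refine forall_congr' fun i => ?_
    by_cases hiA : i ∈ A <;> simp [hiA, not_lt]
  have hmeasE : ∀ A, MeasurableSet (E A) := by
    intro A
    rw [hEset]
    refine MeasurableSet.iInter fun i => (hx i) ?_
    split <;> [exact measurableSet_Iio; exact measurableSet_Ici]
  set 𝒜 : Finset (Finset (Fin n)) :=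
    Finset.univ.powerset.filter (fun A => m + 1 ≤ A.card) with h𝒜
  have hunion : {ω | m + 1 ≤ (T ω).card} = ⋃ A ∈ 𝒜, E A := by
    ext ω
    simp only [Set.mem_setOf_eq, Set.mem_iUnion]
    constructor
    · intro hc
      exact ⟨T ω, by simp [h𝒜, Finset.mem_filter]; omega, (hmemE ω _).mpr rfl⟩
    · rintro ⟨A, hA, hωA⟩
      rw [hmemE] at hωA
      rw [h𝒜, Finset.mem_filter] at hA
      rw [hωA]; exact hA.2
  have hdisj : Set.PairwiseDisjoint (↑𝒜) E := by
    intro A _ B _ hAB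
    refine Set.disjoint_left.mpr fun ω h1 h2 => hAB ?_
    rw [hmemE] at h1 h2
    rw [← h1, ← h2]
  rw [show {ω | m + 1 ≤ (Finset.univ.filter fun i => x i ω < t₀).card}
      = ⋃ A ∈ 𝒜, E A from hunion,
    measure_biUnion_finset hdisj fun A _ => hmeasE A]
  have hAsum : ∀ A ∈ 𝒜, P (E A) = pE ^ A.card * qE ^ (n - A.card) := fun A _ => hprod A
  rw [Finset.sum_congr rfl hAsum]
  have hdecomp : 𝒜 = (Finset.Icc (m+1) n).biUnion
      (fun c => Finset.powersetCard c Finset.univ) := by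
    ext A
    simp only [h𝒜, Finset.mem_filter, Finset.mem_powerset, Finset.mem_biUnion, Finset.mem_Icc,
      Finset.mem_powersetCard]
    constructor
    · intro ⟨h1, h2⟩
      exact ⟨A.card, ⟨h2, by simpa using Finset.card_le_univ A⟩, h1, rfl⟩
    · rintro ⟨c, ⟨hc1, _⟩, hsub, rfl⟩
      exact ⟨hsub, hc1⟩
  rw [hdecomp, Finset.sum_biUnion]
  · refine Finset.sum_congr rfl fun c hc => ?_
    have : ∀ A ∈ Finset.powersetCard c (Finset.univ : Finset (Fin n)),
        pE ^ A.card * qE ^ (n - A.card) = pE ^ c * qE ^ (n - c) := by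
      intro A hA
      rw [(Finset.mem_powersetCard.mp hA).2]
    rw [Finset.sum_congr rfl this, Finset.sum_const, Finset.card_powersetCard,
      Finset.card_univ, Fintype.card_fin, nsmul_eq_mul]
  · intro c hc d hd hcd
    refine Finset.disjoint_left.mpr fun A hAc hAd => hcd ?_
    rw [← (Finset.mem_powersetCard.mp hAc).2, ← (Finset.mem_powersetCard.mp hAd).2]

lemma measurableSet_count {Ω : Type*} [MeasurableSpace Ω] {n : ℕ} (m : ℕ)
    (x : Fin n → Ω → ℝ) (hx : ∀ i, Measurable (x i)) (t₀ : ℝ) :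
    MeasurableSet {ω | m + 1 ≤ (Finset.univ.filter fun i => x i ω < t₀).card} := by
  classical
  have hmeas : Measurable fun ω => (Finset.univ.filter fun i => x i ω < t₀).card := by
    simp only [Finset.card_filter]
    apply Finset.measurable_sum
    intro i _
    exact Measurable.ite ((hx i) measurableSet_Iio) measurable_const measurable_const
  exact hmeas measurableSet_Ici

/-- If `δ ≥ Bin(⌊α(n+1)-1⌋; n, ε)` then the split conformal set
`r_{n+1} ≤ r_{(⌈(1-α)(n+1)⌉)}` (with the order statistic interpreted as `+∞`, i.e. full
coverage, when `⌈(1-α)(n+1)⌉ > n`) is an `(ε,δ)`-tolerance region: with probability at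
least `1-δ` the conditional coverage is at least `1-ε`. -/
theorem split_conformal_tolerance_region
    {Ω : Type*} [MeasurableSpace Ω] (P : Measure Ω) [IsProbabilityMeasure P]
    (n : ℕ) (r : Fin (n + 1) → Ω → ℝ) (hr : ∀ i, Measurable (r i))
    (μ : Measure ℝ) [IsProbabilityMeasure μ]
    (hindep : iIndepFun r P)
    (hid : ∀ i, Measure.map (r i) P = μ)
    (ε δ α : ℝ) (hε : ε ∈ Set.Ioo (0:ℝ) 1) (hδ : δ ∈ Set.Ioo (0:ℝ) 1)
    (hα : α ∈ Set.Ioo (0:ℝ) 1)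
    (hcond : binCDF n (⌊α * (n + 1 : ℝ) - 1⌋).toNat ε ≤ δ) :
    1 - δ ≤ (P {ω | 1 - ε ≤
        (if h : (⌈(1 - α) * (n + 1 : ℝ)⌉).toNat - 1 < n then
          (μ (Set.Iic (orderStat (fun i : Fin n => r i.castSucc ω)
              ⟨(⌈(1 - α) * (n + 1 : ℝ)⌉).toNat - 1, h⟩))).toReal
        else 1)}).toReal := by
  classical
  by_cases h : (⌈(1 - α) * (n + 1 : ℝ)⌉).toNat - 1 < n
  swap
  · simp only [dif_neg h]
    have huniv : {ω : Ω | 1 - ε ≤ (1:ℝ)} = Set.univ := by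
      ext ω; simp only [Set.mem_setOf_eq, Set.mem_univ, iff_true]; linarith [hε.1]
    rw [huniv, measure_univ, ENNReal.toReal_one]
    linarith [hδ.1]
  simp only [dif_pos h]
  -- index arithmetic
  have hε1 : (0:ℝ) < 1 - ε := by linarith [hε.2]
  have hα1 : 0 < α * (n+1:ℝ) := by
    have : (0:ℝ) < (n:ℝ) + 1 := by positivity
    exact mul_pos hα.1 this
  have h1α : 0 < (1 - α) * (n+1:ℝ) := by
    have : (0:ℝ) < (n:ℝ) + 1 := by positivity
    have h2 : (0:ℝ) < 1 - α := by linarith [hα.2]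
    exact mul_pos h2 this
  have hα2 : α * (n+1:ℝ) < (n:ℝ)+1 := by nlinarith [hα.2]
  have hceil : ⌈(1 - α) * (n + 1 : ℝ)⌉ = (n+1 : ℤ) - ⌊α * (n+1:ℝ)⌋ := by
    rw [show (1 - α) * (n + 1 : ℝ) = -(α * (n+1:ℝ) - ((n+1 : ℤ):ℝ)) by push_cast; ring,
      Int.ceil_neg, Int.floor_sub_intCast]
    ring
  have hfloor : ⌊α * (n + 1 : ℝ) - 1⌋ = ⌊α * (n+1:ℝ)⌋ - 1 := by
    rw [show α * ((n:ℝ) + 1) - 1 = α * ((n:ℝ)+1) - ((1:ℤ):ℝ) by norm_num, Int.floor_sub_intCast]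
  have hf0 : 0 ≤ ⌊α * (n+1:ℝ)⌋ := Int.floor_nonneg.mpr hα1.le
  have hfn : ⌊α * (n+1:ℝ)⌋ ≤ (n:ℤ) := by
    have := Int.floor_lt.mpr (show α*(n+1:ℝ) < ((n+1:ℤ):ℝ) by push_cast; linarith)
    omega
  have hj0 : 0 < ⌈(1 - α) * (n + 1 : ℝ)⌉ := Int.ceil_pos.mpr h1α
  have hjto : ((⌈(1 - α) * (n + 1 : ℝ)⌉).toNat : ℤ) = (n+1:ℤ) - ⌊α*(n+1:ℝ)⌋ := by
    rw [Int.toNat_of_nonneg hj0.le, hceil]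
  set m := (⌈(1 - α) * (n + 1 : ℝ)⌉).toNat - 1 with hm
  have hk_eq : (⌊α * (n + 1 : ℝ) - 1⌋).toNat = n - m - 1 := by
    rw [hfloor]; omega
  set k := n - m - 1 with hkdef
  -- quantile facts
  set S : Set ℝ := {t | 1 - ε ≤ cdf μ t} with hSdef
  have hSne : S.Nonempty := by
    have h1 : ∀ᶠ t : ℝ in Filter.atTop, 1 - ε ≤ cdf μ t :=
      (tendsto_cdf_atTop μ).eventually (eventually_ge_nhds (by linarith [hε.1]))
    obtain ⟨t, ht⟩ := h1.exists
    exact ⟨t, ht⟩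
  have hbdd : BddBelow S := by
    have h1 : ∀ᶠ t : ℝ in Filter.atBot, cdf μ t < 1 - ε :=
      (tendsto_cdf_atBot μ).eventually (eventually_lt_nhds hε1)
    obtain ⟨t₁, ht₁⟩ := h1.exists
    refine ⟨t₁, fun s hs => ?_⟩
    by_contra hc
    push_neg at hc
    have : cdf μ s ≤ cdf μ t₁ := (monotone_cdf μ) hc.le
    have hs' : 1 - ε ≤ cdf μ s := hs
    linarith
  set t₀ := sInf S with ht₀def
  have ht₀S : ∀ u, t₀ < u → 1 - ε ≤ cdf μ u := by
    intro u hu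
    obtain ⟨s, hsS, hsu⟩ := (csInf_lt_iff hbdd hSne).mp hu
    exact le_trans hsS ((monotone_cdf μ) hsu.le)
  have hF0 : 1 - ε ≤ cdf μ t₀ := by
    have hct : Filter.Tendsto (cdf μ) (nhdsWithin t₀ (Set.Ioi t₀)) (nhds (cdf μ t₀)) :=
      ((cdf μ).right_continuous t₀).mono_left (nhdsWithin_mono _ Set.Ioi_subset_Ici_self)
    exact ge_of_tendsto hct (eventually_nhdsWithin_of_forall fun u hu => ht₀S u hu)
  have hlow : ∀ u, u < t₀ → cdf μ u < 1 - ε := by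
    intro u hu
    by_contra hc
    push_neg at hc
    exact absurd (csInf_le hbdd hc) (not_le.mpr hu)
  set pE := μ (Set.Iio t₀) with hpEdef
  set qE := μ (Set.Ici t₀) with hqEdef
  have hIio : pE ≤ ENNReal.ofReal (1 - ε) := by
    have hU : Set.Iio t₀ = ⋃ j : ℕ, Set.Iic (t₀ - 1/(j+1)) := by
      ext u
      simp only [Set.mem_Iio, Set.mem_iUnion, Set.mem_Iic]
      constructor
      · intro hu
        obtain ⟨j, hj⟩ := exists_nat_one_div_lt (show (0:ℝ) < t₀ - u by linarith)
        exact ⟨j, by push_cast at hj ⊢; linarith⟩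
      · rintro ⟨j, hj⟩
        have : (0:ℝ) < 1/(j+1) := by positivity
        linarith
    have hmono : Monotone fun j : ℕ => Set.Iic (t₀ - 1/((j:ℝ)+1)) := by
      intro a b hab
      apply Set.Iic_subset_Iic.mpr
      have h1 : (1:ℝ)/((b:ℝ)+1) ≤ 1/((a:ℝ)+1) := by
        apply one_div_le_one_div_of_le (by positivity)
        have : (a:ℝ) ≤ b := by exact_mod_cast hab
        linarith
      linarith
    rw [hpEdef, hU, hmono.directed_le.measure_iUnion]
    refine iSup_le fun j => ?_
    have hu : t₀ - 1/((j:ℝ)+1) < t₀ := by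
      have : (0:ℝ) < 1/((j:ℝ)+1) := by positivity
      linarith
    rw [← ofReal_cdf μ]
    exact ENNReal.ofReal_le_ofReal (hlow _ hu).le
  have hqsum : pE + qE = 1 := by
    have h1 := measure_add_measure_compl (μ := μ) (measurableSet_Iio (a := t₀))
    rw [Set.compl_Iio] at h1
    rw [hpEdef, hqEdef, h1, measure_univ]
  have hpE_top : pE ≠ ⊤ := measure_ne_top μ _
  have hqE_top : qE ≠ ⊤ := measure_ne_top μ _
  set p := pE.toReal with hpdef
  set q' := qE.toReal with hq'def
  have hp : p ≤ 1 - ε := by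
    have := ENNReal.toReal_mono ENNReal.ofReal_ne_top hIio
    rwa [ENNReal.toReal_ofReal hε1.le] at this
  have hpq : p + q' = 1 := by
    have h1 := congrArg ENNReal.toReal hqsum
    rwa [ENNReal.toReal_add hpE_top hqE_top, ENNReal.toReal_one] at h1
  have hq'ε : ε ≤ q' := by linarith
  have hq'1 : q' ≤ 1 := by
    have : (0:ℝ) ≤ p := ENNReal.toReal_nonneg
    linarith
  have hq'0 : (0:ℝ) ≤ q' := ENNReal.toReal_nonneg
  -- the product formula from independence
  set x : Fin n → Ω → ℝ := fun i => r i.castSucc with hxdef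
  have hxm : ∀ i, Measurable (x i) := fun i => hr i.castSucc
  have hprod : ∀ A : Finset (Fin n),
      P {ω | ∀ i : Fin n, (x i ω < t₀ ↔ i ∈ A)} = pE ^ A.card * qE ^ (n - A.card) := by
    intro A
    set B : Fin (n+1) → Set ℝ := fun j =>
      if hj : (j : ℕ) < n then (if (⟨(j:ℕ), hj⟩ : Fin n) ∈ A then Set.Iio t₀ else Set.Ici t₀)
      else Set.univ with hB
    set Sfin : Finset (Fin (n+1)) := Finset.univ.map Fin.castSuccEmb with hSfin
    have hBcast : ∀ i : Fin n, B (Fin.castSucc i) = if i ∈ A then Set.Iio t₀ else Set.Ici t₀ := by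
      intro i
      have hlt : ((Fin.castSucc i : Fin (n+1)) : ℕ) < n := by simp
      rw [hB]
      simp only [dif_pos hlt]
      congr 1
    have hBmeas : ∀ j, j ∈ Sfin → MeasurableSet (B j) := by
      intro j _
      rw [hB]
      dsimp only
      split
      · split
        · exact measurableSet_Iio
        · exact measurableSet_Ici
      · exact MeasurableSet.univ
    have hkey := hindep.measure_inter_preimage_eq_mul Sfin hBmeas
    have hset : (⋂ j ∈ Sfin, r j ⁻¹' B j) = {ω | ∀ i : Fin n, (x i ω < t₀ ↔ i ∈ A)} := by
      ext ω
      simp only [Set.mem_iInter, hSfin, Finset.mem_map, Finset.mem_univ, true_and,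
        Set.mem_preimage, Set.mem_setOf_eq, Fin.coe_castSuccEmb]
      constructor
      · intro hω i
        have h2 := hω (Fin.castSucc i) ⟨i, rfl⟩
        rw [hBcast i] at h2
        by_cases hiA : i ∈ A
        · simp only [if_pos hiA, Set.mem_Iio] at h2
          simp [hiA, hxdef, h2]
        · simp only [if_neg hiA, Set.mem_Ici] at h2
          simp [hiA, hxdef, not_lt.mpr h2]
      · rintro hω j ⟨i, rfl⟩
        rw [hBcast i]
        by_cases hiA : i ∈ A
        · simp only [if_pos hiA, Set.mem_Iio]
          exact (hω i).mpr hiA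
        · simp only [if_neg hiA, Set.mem_Ici]
          have h3 := (hω i)
          simp only [hiA, iff_false, not_lt] at h3
          exact h3
    rw [← hset, hkey, hSfin, Finset.prod_map]
    have hterm : ∀ i : Fin n,
        P (r (Fin.castSuccEmb i) ⁻¹' B (Fin.castSuccEmb i))
          = if i ∈ A then pE else qE := by
      intro i
      have he : (Fin.castSuccEmb i : Fin (n+1)) = Fin.castSucc i := rfl
      rw [he, hBcast i]
      by_cases hiA : i ∈ A
      · rw [if_pos hiA, if_pos hiA, hpEdef, ← hid (Fin.castSucc i),
          Measure.map_apply (hr _) measurableSet_Iio]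
      · rw [if_neg hiA, if_neg hiA, hqEdef, ← hid (Fin.castSucc i),
          Measure.map_apply (hr _) measurableSet_Ici]
    rw [Finset.prod_congr rfl fun i _ => hterm i]
    rw [← Finset.prod_mul_prod_compl A]
    have h1 : ∏ i ∈ A, (if i ∈ A then pE else qE) = pE ^ A.card := by
      rw [Finset.prod_congr rfl fun i hi => if_pos hi, Finset.prod_const]
    have h2 : ∏ i ∈ Aᶜ, (if i ∈ A then pE else qE) = qE ^ (n - A.card) := by
      rw [Finset.prod_congr rfl fun i hi => if_neg (Finset.mem_compl.mp hi), Finset.prod_const,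
        Finset.card_compl, Fintype.card_fin]
    rw [h1, h2]
  -- the counting event
  set C : Set Ω := {ω | m + 1 ≤ (Finset.univ.filter fun i => x i ω < t₀).card} with hCdef
  have hCmeas : MeasurableSet C := measurableSet_count m x hxm t₀
  have hPC := measure_count_ge P x hxm t₀ pE qE hprod m
  -- inclusion
  have hsub : Cᶜ ⊆ {ω | 1 - ε ≤
      (μ (Set.Iic (orderStat (fun i : Fin n => r i.castSucc ω) ⟨m, h⟩))).toReal} := by
    intro ω hω
    simp only [hCdef, Set.mem_compl_iff, Set.mem_setOf_eq, not_le] at hω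
    simp only [Set.mem_setOf_eq]
    rw [← measureReal_def, ← cdf_eq_real]
    by_contra hc
    push_neg at hc
    have hvt : orderStat (fun i : Fin n => r i.castSucc ω) ⟨m, h⟩ < t₀ := by
      by_contra hv
      push_neg at hv
      have h4 := (monotone_cdf μ) hv
      linarith
    have hcount : m + 1 ≤ (Finset.univ.filter fun i => x i ω < t₀).card :=
      count_of_orderStat_lt (fun i : Fin n => r i.castSucc ω) t₀ h hvt
    omega
  -- numeric conclusion
  have hn1 : 1 ≤ n := by omega
  have hkN : k ≤ n - 1 := by omega
  have hsum_toReal : (P C).toReal = binCDF n k q' := by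
    rw [hPC]
    rw [ENNReal.toReal_sum (fun c _ =>
      ENNReal.mul_ne_top (ENNReal.natCast_ne_top _)
        (ENNReal.mul_ne_top (ENNReal.pow_ne_top hpE_top) (ENNReal.pow_ne_top hqE_top)))]
    have h1p : 1 - q' = p := by linarith
    rw [show binCDF n k q' = ∑ i ∈ Finset.range (k+1), (n.choose i : ℝ) * q' ^ i * p ^ (n - i) by
      rw [binCDF]
      exact Finset.sum_congr rfl fun i _ => by rw [h1p]]
    refine Finset.sum_bij' (i := fun c _ => n - c) (j := fun i _ => n - i)
      ?_ ?_ ?_ ?_ ?_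
    · intro c hc
      rw [Finset.mem_Icc] at hc
      have : n - c < k + 1 := by omega
      simpa using this
    · intro i hi
      rw [Finset.mem_range] at hi
      have : m + 1 ≤ n - i ∧ n - i ≤ n := by omega
      simpa using this
    · intro c hc
      rw [Finset.mem_Icc] at hc
      show n - (n - c) = c
      omega
    · intro i hi
      rw [Finset.mem_range] at hi
      show n - (n - i) = i
      omega
    · intro c hc
      rw [Finset.mem_Icc] at hc
      rw [ENNReal.toReal_mul, ENNReal.toReal_mul, ENNReal.toReal_pow, ENNReal.toReal_pow,
        ENNReal.toReal_natCast, Nat.choose_symm hc.2, show n - (n - c) = c by omega,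
        ← hpdef, ← hq'def]
      ring
  have hPCle : (P C).toReal ≤ δ := by
    rw [hsum_toReal]
    have h2 : binCDF n k q' ≤ binCDF n k ε := by
      have hA := binCDF_antitoneOn (n-1) k hkN
      have hn' : n - 1 + 1 = n := by omega
      rw [hn'] at hA
      exact hA ⟨hε.1.le, hε.2.le⟩ ⟨hq'0, hq'1⟩ hq'ε
    have h3 : binCDF n k ε ≤ δ := by rw [← hk_eq]; exact hcond
    linarith
  have hcompl : (P Cᶜ).toReal = 1 - (P C).toReal := by
    rw [prob_compl_eq_one_sub hCmeas,
      ENNReal.toReal_sub_of_le prob_le_one ENNReal.one_ne_top, ENNReal.toReal_one]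
  calc 1 - δ ≤ 1 - (P C).toReal := by linarith
    _ = (P Cᶜ).toReal := hcompl.symm
    _ ≤ _ := ENNReal.toReal_mono (measure_ne_top P _) (measure_mono hsub)
end

section
/- Let r_1,…,r_{n+1} be iid, ε, δ ∈ (0,1), and set k* = sup{k ∈ {0,…,n} : Bin(k; n, ε) ≤ δ} (assume it exists) and P̂ = r_{(n−k*)}. Then P[r_{n+1} ≤ P̂] ≥ 1 − (k*+1)/(n+1); i.e., the (ε,δ)-tolerance quantile choice also satisfies marginal coverage at confidence 1 − (k*+1)/(n+1). -/
open MeasureTheory ProbabilityTheory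
open scoped ENNReal

section AuxTQMC

/-- At most `k+1` indices can strictly exceed at least `n-k` of the other values. -/
lemma aux_card_bound_tqmc {n k : ℕ} (hk : k < n) (x : Fin (n+1) → ℝ) :
    (Finset.univ.filter (fun i : Fin (n+1) =>
      n - k ≤ (Finset.univ.filter (fun j => x j < x i)).card)).card ≤ k + 1 := by
  classical
  by_contra hcon
  push_neg at hcon
  set S := (Finset.univ.filter (fun i : Fin (n+1) =>
      n - k ≤ (Finset.univ.filter (fun j => x j < x i)).card)) with hS
  have hSne : S.Nonempty := Finset.card_pos.mp (by omega)
  obtain ⟨i0, hi0S, hi0min⟩ := S.exists_min_image x hSne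
  have h1 : n - k ≤ (Finset.univ.filter (fun j => x j < x i0)).card :=
    (Finset.mem_filter.mp hi0S).2
  have hsub : (Finset.univ.filter (fun j => x j < x i0)) ⊆ Sᶜ := by
    intro j hj
    simp only [Finset.mem_compl]
    intro hjS
    exact absurd ((Finset.mem_filter.mp hj).2) (not_lt.mpr (hi0min j hjS))
  have h2 := Finset.card_le_card hsub
  have h3 : Sᶜ.card = (n+1) - S.card := by
    have := Finset.card_compl S
    simpa [Fintype.card_fin] using this
  omega

/-- If the last value strictly exceeds the `(n-k)`-th order statistic of the first `n`,
then it strictly exceeds at least `n-k` of the values. -/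
lemma aux_order_tqmc {n k : ℕ} (hk : k < n) (x : Fin (n+1) → ℝ)
    (h : orderStat (fun i : Fin n => x i.castSucc) ⟨n - k - 1, by omega⟩ < x (Fin.last n)) :
    n - k ≤ (Finset.univ.filter (fun j => x j < x (Fin.last n))).card := by
  classical
  set y : Fin n → ℝ := fun i => x i.castSucc with hy
  have hle : n - k ≤ n := by omega
  set φ : Fin (n - k) → Fin (n+1) := fun t => (Tuple.sort y (Fin.castLE hle t)).castSucc with hφ
  have hinj : Function.Injective φ :=
    Fin.castSucc_injective n |>.comp ((Tuple.sort y).injective.comp (Fin.castLE_injective hle))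
  have hmem : ∀ t : Fin (n - k), φ t ∈ Finset.univ.filter (fun j => x j < x (Fin.last n)) := by
    intro t
    simp only [Finset.mem_filter, Finset.mem_univ, true_and]
    have h1 : y (Tuple.sort y (Fin.castLE hle t)) ≤ y (Tuple.sort y ⟨n - k - 1, by omega⟩) := by
      apply Tuple.monotone_sort y
      show (Fin.castLE hle t) ≤ _
      have := t.2
      simp only [Fin.le_def, Fin.coe_castLE]
      omega
    calc x (φ t) = y (Tuple.sort y (Fin.castLE hle t)) := rfl
      _ ≤ y (Tuple.sort y ⟨n - k - 1, by omega⟩) := h1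
      _ < x (Fin.last n) := h
  calc n - k = (Finset.univ : Finset (Fin (n - k))).card := by simp
    _ ≤ _ := Finset.card_le_card_of_injOn φ (fun t _ => hmem t) (hinj.injOn)

lemma aux_measB_tqmc {n k : ℕ} :
    MeasurableSet {x : Fin (n+1) → ℝ |
      n - k ≤ (Finset.univ.filter (fun j => x j < x (Fin.last n))).card} := by
  classical
  have hc : Measurable (fun x : Fin (n+1) → ℝ =>
      (Finset.univ.filter (fun j => x j < x (Fin.last n))).card) := by
    simp only [Finset.card_filter]
    apply Finset.measurable_sum
    intro j _
    exact Measurable.ite (measurableSet_lt (measurable_pi_apply j)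
      (measurable_pi_apply (Fin.last n))) measurable_const measurable_const
  exact hc MeasurableSet.of_discrete

/-- Permutation invariance of a product of identical measures. -/
lemma aux_perm_tqmc {n : ℕ} (μ : Measure ℝ) [IsProbabilityMeasure μ]
    (e : Equiv.Perm (Fin (n+1))) {B : Set (Fin (n+1) → ℝ)} (hB : MeasurableSet B) :
    Measure.pi (fun _ : Fin (n+1) => μ) ((fun x => x ∘ e) ⁻¹' B)
      = Measure.pi (fun _ : Fin (n+1) => μ) B := by
  have h := MeasureTheory.measurePreserving_piCongrLeft (fun _ : Fin (n+1) => μ) e.symm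
  have heq : (MeasurableEquiv.piCongrLeft (fun _ : Fin (n+1) => ℝ) e.symm)
      = fun x : Fin (n+1) → ℝ => x ∘ e := by
    ext x j
    simp [MeasurableEquiv.piCongrLeft, Equiv.piCongrLeft_apply, eq_rec_constant]
  rw [← heq]
  exact h.measure_preimage hB.nullMeasurableSet

/-- The joint law of independent identically distributed coordinates is the product measure. -/
lemma aux_map_pi_tqmc {Ω : Type*} [MeasurableSpace Ω] (P : Measure Ω) [IsProbabilityMeasure P]
    {n : ℕ} (r : Fin (n + 1) → Ω → ℝ) (hr : ∀ i, Measurable (r i))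
    (μ : Measure ℝ)
    (hindep : iIndepFun r P)
    (hid : ∀ i, Measure.map (r i) P = μ) :
    Measure.map (fun ω i => r i ω) P = Measure.pi (fun _ : Fin (n+1) => μ) := by
  classical
  have hμ : IsProbabilityMeasure μ := by
    rw [← hid 0]; exact Measure.isProbabilityMeasure_map (hr 0).aemeasurable
  have hrv : Measurable (fun ω i => r i ω) := measurable_pi_lambda _ hr
  refine (Measure.pi_eq (μ := fun _ : Fin (n+1) => μ) (fun s hs => ?_)).symm
  rw [Measure.map_apply hrv (MeasurableSet.univ_pi hs)]
  have hpre : (fun ω i => r i ω) ⁻¹' (Set.pi Set.univ s)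
      = ⋂ i ∈ Finset.univ, r i ⁻¹' s i := by
    ext ω; simp [Set.mem_pi]
  rw [hpre, hindep.measure_inter_preimage_eq_mul Finset.univ (fun i _ => hs i)]
  exact Finset.prod_congr rfl fun i _ => by rw [← hid i, Measure.map_apply (hr i) (hs i)]

/-- Union bound via counting multiplicity. -/
lemma aux_sum_tqmc {α : Type*} [MeasurableSpace α] (ν : Measure α) [IsProbabilityMeasure ν]
    {ι : Type*} [Fintype ι] (B : ι → Set α) (hB : ∀ i, MeasurableSet (B i)) (c : ℕ)
    [∀ x i, Decidable (x ∈ B i)]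
    (hcard : ∀ x, (Finset.univ.filter (fun i => x ∈ B i)).card ≤ c) :
    ∑ i, ν (B i) ≤ (c : ℝ≥0∞) := by
  classical
  calc ∑ i, ν (B i) = ∫⁻ x, ∑ i, Set.indicator (B i) (fun _ => (1:ℝ≥0∞)) x ∂ν := by
        rw [lintegral_finset_sum _ (fun i _ => (measurable_const (a := (1:ℝ≥0∞))).indicator (hB i))]
        exact Finset.sum_congr rfl fun i _ => by
          rw [lintegral_indicator (hB i)]; simp
    _ ≤ ∫⁻ _, (c:ℝ≥0∞) ∂ν := by
        refine lintegral_mono fun x => ?_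
        have h : ∑ i, Set.indicator (B i) (fun _ => (1:ℝ≥0∞)) x
            = ((Finset.univ.filter (fun i => x ∈ B i)).card : ℝ≥0∞) := by
          rw [Finset.card_filter]
          push_cast
          exact Finset.sum_congr rfl fun i _ => by
            by_cases hx : x ∈ B i <;> simp [Set.indicator_apply, hx]
        rw [h]
        exact Nat.cast_le.mpr (hcard x)
    _ = c := by simp

end AuxTQMC

/-- With `k* = sup{k : Bin(k; n, ε) ≤ δ}` and `P̂ = r_{(n-k*)}`, the tolerance-region
quantile also gives marginal coverage: `P[r_{n+1} ≤ P̂] ≥ 1 - (k*+1)/(n+1)`. -/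
theorem tolerance_quantile_marginal_coverage
    {Ω : Type*} [MeasurableSpace Ω] (P : Measure Ω) [IsProbabilityMeasure P]
    (n : ℕ) (hn : 1 ≤ n) (r : Fin (n + 1) → Ω → ℝ) (hr : ∀ i, Measurable (r i))
    (μ : Measure ℝ)
    (hindep : iIndepFun r P)
    (hid : ∀ i, Measure.map (r i) P = μ)
    (ε δ : ℝ) (hε : ε ∈ Set.Ioo (0:ℝ) 1) (hδ : δ ∈ Set.Ioo (0:ℝ) 1)
    (k : ℕ) (hkle : k ≤ n) (hkmem : binCDF n k ε ≤ δ)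
    (hkmax : ∀ k' ≤ n, binCDF n k' ε ≤ δ → k' ≤ k) :
    1 - ((k : ℝ) + 1) / (n + 1)
      ≤ (P {ω | r (Fin.last n) ω ≤
          orderStat (fun i : Fin n => r i.castSucc ω) ⟨n - k - 1, by omega⟩}).toReal := by
  classical
  rcases eq_or_lt_of_le hkle with hkn | hkn
  · -- k = n : the bound is trivial
    subst hkn
    have h0 : 1 - ((k : ℝ) + 1) / ((k : ℝ) + 1) = 0 := by
      have : ((k : ℝ) + 1) ≠ 0 := by positivity
      field_simp
      simp
    rw [h0]
    exact ENNReal.toReal_nonneg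
  -- main case : k < n
  have hμ : IsProbabilityMeasure μ := by
    rw [← hid 0]; exact Measure.isProbabilityMeasure_map (hr 0).aemeasurable
  set ν : Measure (Fin (n+1) → ℝ) := Measure.pi (fun _ => μ) with hνdef
  set rv : Ω → (Fin (n+1) → ℝ) := fun ω i => r i ω with hrvdef
  have hrv : Measurable rv := measurable_pi_lambda _ hr
  have hmap : Measure.map rv P = ν := aux_map_pi_tqmc P r hr μ hindep hid
  set B : Set (Fin (n+1) → ℝ) :=
    {x | n - k ≤ (Finset.univ.filter (fun j => x j < x (Fin.last n))).card} with hBdef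
  have hB : MeasurableSet B := aux_measB_tqmc
  set g : Fin (n+1) → (Fin (n+1) → ℝ) → (Fin (n+1) → ℝ) :=
    fun i x => x ∘ (Equiv.swap i (Fin.last n)) with hgdef
  have hgB : ∀ (i : Fin (n+1)) (x : Fin (n+1) → ℝ),
      x ∈ g i ⁻¹' B ↔ n - k ≤ (Finset.univ.filter (fun j => x j < x i)).card := by
    intro i x
    simp only [hgdef, Set.mem_preimage, hBdef, Set.mem_setOf_eq, Function.comp]
    have hcards : (Finset.univ.filter
          (fun j => x (Equiv.swap i (Fin.last n) j) < x (Equiv.swap i (Fin.last n) (Fin.last n)))).card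
        = (Finset.univ.filter (fun j => x j < x i)).card := by
      rw [Equiv.swap_apply_right]
      exact Finset.card_equiv (Equiv.swap i (Fin.last n)) (fun j => by simp)
    rw [hcards]
  have hνB : ∀ i : Fin (n+1), ν (g i ⁻¹' B) = ν B := fun i =>
    aux_perm_tqmc μ (Equiv.swap i (Fin.last n)) hB
  have hgmeas : ∀ i, Measurable (g i) :=
    fun i => measurable_pi_lambda _ fun j => measurable_pi_apply _
  -- counting bound
  have hsum : ∑ i : Fin (n+1), ν (g i ⁻¹' B) ≤ ((k+1 : ℕ) : ℝ≥0∞) := by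
    refine aux_sum_tqmc ν _ (fun i => (hgmeas i) hB) (k+1) (fun x => ?_)
    have hfil : (Finset.univ.filter (fun i : Fin (n+1) => x ∈ g i ⁻¹' B))
        = (Finset.univ.filter (fun i : Fin (n+1) =>
            n - k ≤ (Finset.univ.filter (fun j => x j < x i)).card)) := by
      apply Finset.filter_congr
      intro i _
      simp [hgB i x]
    rw [hfil]
    exact aux_card_bound_tqmc hkn x
  have hmul : ((n+1 : ℕ) : ℝ≥0∞) * ν B ≤ ((k+1 : ℕ) : ℝ≥0∞) := by
    have : ∑ i : Fin (n+1), ν (g i ⁻¹' B) = ((n+1 : ℕ) : ℝ≥0∞) * ν B := by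
      simp [hνB, Finset.sum_const, Finset.card_univ, nsmul_eq_mul]
    rwa [this] at hsum
  have hνBle : ν B ≤ ((k+1 : ℕ) : ℝ≥0∞) / ((n+1 : ℕ) : ℝ≥0∞) := by
    rw [ENNReal.le_div_iff_mul_le (Or.inl (by exact_mod_cast Nat.succ_ne_zero n))
      (Or.inl (ENNReal.natCast_ne_top _))]
    rw [mul_comm]
    exact hmul
  -- the bad event
  have hPbad : P (rv ⁻¹' B) = ν B := by
    rw [← hmap, Measure.map_apply hrv hB]
  -- inclusion : complement of bad event is inside the goal event
  set G : Set Ω := {ω | r (Fin.last n) ω ≤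
      orderStat (fun i : Fin n => r i.castSucc ω) ⟨n - k - 1, by omega⟩} with hGdef
  have hincl : (rv ⁻¹' B)ᶜ ⊆ G := by
    intro ω hω
    simp only [Set.mem_compl_iff, Set.mem_preimage, hBdef, Set.mem_setOf_eq] at hω
    simp only [hGdef, Set.mem_setOf_eq]
    by_contra hlt
    push_neg at hlt
    exact hω (aux_order_tqmc hkn (rv ω) hlt)
  -- conclude
  have hmono : P ((rv ⁻¹' B)ᶜ) ≤ P G := measure_mono hincl
  have hcompl : P ((rv ⁻¹' B)ᶜ) = 1 - P (rv ⁻¹' B) :=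
    prob_compl_eq_one_sub (hrv hB)
  have hfin : ((k+1 : ℕ) : ℝ≥0∞) / ((n+1 : ℕ) : ℝ≥0∞) ≠ ⊤ := by
    simp [ENNReal.div_eq_top]
  have hbadReal : (P (rv ⁻¹' B)).toReal ≤ ((k : ℝ) + 1) / ((n : ℝ) + 1) := by
    have h := ENNReal.toReal_mono hfin (hPbad ▸ hνBle)
    rw [ENNReal.toReal_div] at h
    rw [ENNReal.toReal_natCast, ENNReal.toReal_natCast] at h
    simpa using h
  have hGreal : 1 - (P (rv ⁻¹' B)).toReal ≤ (P G).toReal := by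
    have h1 : (P ((rv ⁻¹' B)ᶜ)).toReal ≤ (P G).toReal :=
      ENNReal.toReal_mono (measure_ne_top P G) hmono
    have h2 : (P ((rv ⁻¹' B)ᶜ)).toReal = 1 - (P (rv ⁻¹' B)).toReal := by
      rw [hcompl, ENNReal.toReal_sub_of_le prob_le_one ENNReal.one_ne_top]
      simp
    linarith
  have := hbadReal
  linarith
end
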